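/- Let 1 < q ≤ ∞ and s ≤ n/q′ with ε > 0 chosen so that 1 − 1/q − ε > 0. Define for integers N ≥ 1 the sequences on ℤⁿ: a_k = ⟨k⟩^{−n/q − s}(C + log⟨k⟩)^{−1/q − ε} for |k| ≤ N (and 0 otherwise), and b_k = 1 for N ≤ |k| ≤ 5N (and 0 otherwise). Then ‖a‖_{ℓ^q_s} ≤ C₁ (uniformly in N), ‖b‖_{ℓ^q_s} ∼ N^{s + n/q}, while for every k with 2N ≤ |k| ≤ 4N the convolution satisfies (a∗b)_k ≥ c (1 + log(1 + N/2))^{1 − 1/q − ε}, so that ‖a∗b‖_{ℓ^q_s} ≥ c′ N^{s+n/q}(1 + log(1+N/2))^{1−1/q−ε}; hence no bound ‖a∗b‖_{ℓ^q_s} ≲ ‖a‖_{ℓ^q_s}‖b‖_{ℓ^q_s} can hold uniformly in N. -/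

import Mathlib

open MeasureTheory
open scoped ENNReal NNReal

noncomputable section

/-- The Japanese bracket `⟨k⟩ = (1+|k|²)^{1/2}` on `ℤⁿ`. -/
def jbZ {n : ℕ} (k : Fin n → ℤ) : ℝ := (1 + ∑ i, ((k i : ℝ)) ^ 2) ^ ((1:ℝ)/2)

/-- The Euclidean length `|k|` of `k ∈ ℤⁿ`. -/
def normZ {n : ℕ} (k : Fin n → ℤ) : ℝ := Real.sqrt (∑ i, ((k i : ℝ)) ^ 2)

/-- The weighted norm `‖a‖_{ℓ^q_s}` of a real sequence on `ℤⁿ`. -/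
def lqsNormR {n : ℕ} (q : ℝ≥0∞) (s : ℝ) (a : (Fin n → ℤ) → ℝ) : ℝ≥0∞ :=
  eLpNorm (fun k => jbZ k ^ s * |a k|) q Measure.count

/-- The test sequence `a_k = ⟨k⟩^{−n/q−s} (C₀ + log⟨k⟩)^{−1/q−ε}` for `|k| ≤ N`,
`0` otherwise. -/
def seqA {n : ℕ} (q : ℝ≥0∞) (s C₀ ε : ℝ) (N : ℕ) (k : Fin n → ℤ) : ℝ :=
  if normZ k ≤ N then
    jbZ k ^ (-((n : ℝ) / q.toReal) - s) * (C₀ + Real.log (jbZ k)) ^ (-(1 / q.toReal) - ε)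
  else 0

/-- The test sequence `b_k = 1` for `N ≤ |k| ≤ 5N`, `0` otherwise. -/
def seqB {n : ℕ} (N : ℕ) (k : Fin n → ℤ) : ℝ :=
  if (N : ℝ) ≤ normZ k ∧ normZ k ≤ 5 * N then 1 else 0

namespace CE

variable {n : ℕ}

lemma sumsq_nonneg (k : Fin n → ℤ) : (0:ℝ) ≤ ∑ i, ((k i : ℝ))^2 :=
  Finset.sum_nonneg fun i _ => sq_nonneg _

lemma jbZ_sqrt (k : Fin n → ℤ) : jbZ k = Real.sqrt (1 + ∑ i, ((k i : ℝ))^2) := by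
  rw [jbZ, Real.rpow_def_of_pos (by positivity)]
  rw [Real.sqrt_eq_rpow, Real.rpow_def_of_pos (by positivity)]

lemma normZ_nonneg (k : Fin n → ℤ) : 0 ≤ normZ k := Real.sqrt_nonneg _

lemma normZ_sq (k : Fin n → ℤ) : normZ k ^ 2 = ∑ i, ((k i : ℝ))^2 :=
  Real.sq_sqrt (sumsq_nonneg k)

lemma jbZ_eq (k : Fin n → ℤ) : jbZ k = Real.sqrt (1 + normZ k ^ 2) := by
  rw [jbZ_sqrt, normZ_sq]

lemma one_le_jbZ (k : Fin n → ℤ) : 1 ≤ jbZ k := by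
  rw [jbZ_sqrt]
  nlinarith [Real.sq_sqrt (by positivity : (0:ℝ) ≤ 1 + ∑ i, ((k i : ℝ))^2),
    Real.sqrt_nonneg (1 + ∑ i, ((k i : ℝ))^2), sumsq_nonneg k]

lemma jbZ_pos (k : Fin n → ℤ) : 0 < jbZ k := lt_of_lt_of_le one_pos (one_le_jbZ k)

lemma normZ_le_jbZ (k : Fin n → ℤ) : normZ k ≤ jbZ k := by
  rw [jbZ_sqrt, normZ]
  exact Real.sqrt_le_sqrt (by linarith)

lemma jbZ_le_one_add_normZ (k : Fin n → ℤ) : jbZ k ≤ 1 + normZ k := by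
  rw [jbZ_eq]
  have h : 1 + normZ k ^ 2 ≤ (1 + normZ k) ^ 2 := by nlinarith [normZ_nonneg k]
  calc Real.sqrt (1 + normZ k ^ 2) ≤ Real.sqrt ((1 + normZ k)^2) := Real.sqrt_le_sqrt h
    _ = 1 + normZ k := by rw [Real.sqrt_sq (by linarith [normZ_nonneg k])]

lemma abs_coord_le_normZ (k : Fin n → ℤ) (i : Fin n) : |(k i : ℝ)| ≤ normZ k := by
  rw [normZ, ← Real.sqrt_sq_eq_abs]
  exact Real.sqrt_le_sqrt (Finset.single_le_sum (f := fun i => ((k i:ℝ))^2)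
    (fun j _ => sq_nonneg _) (Finset.mem_univ i))

def vE (k : Fin n → ℤ) : EuclideanSpace ℝ (Fin n) := WithLp.toLp 2 (fun i => (k i : ℝ))

lemma normZ_eq_norm (k : Fin n → ℤ) : normZ k = ‖vE k‖ := by
  rw [EuclideanSpace.norm_eq, normZ]
  congr 1
  refine Finset.sum_congr rfl fun i _ => ?_
  rw [Real.norm_eq_abs, sq_abs]
  rfl

lemma normZ_sub_le (k l : Fin n → ℤ) : normZ (k - l) ≤ normZ k + normZ l := by
  have h : vE (k - l) = vE k - vE l := by
    ext i; simp [vE, Pi.sub_apply]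
  rw [normZ_eq_norm, normZ_eq_norm, normZ_eq_norm, h]
  exact norm_sub_le _ _

lemma sub_normZ_le (k l : Fin n → ℤ) : normZ k - normZ l ≤ normZ (k - l) := by
  have h : vE (k - l) = vE k - vE l := by
    ext i; simp [vE, Pi.sub_apply]
  rw [normZ_eq_norm, normZ_eq_norm, normZ_eq_norm, h]
  exact norm_sub_norm_le _ _

/-! ### Boxes and counting -/

def box (n R : ℕ) : Finset (Fin n → ℤ) := Fintype.piFinset fun _ => Finset.Icc (-(R:ℤ)) R

lemma card_box (R : ℕ) : (box n R).card = (2*R+1)^n := by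
  rw [box, Fintype.card_piFinset]
  have h : (Finset.Icc (-(R:ℤ)) R).card = 2*R+1 := by
    rw [Int.card_Icc]; omega
  simp [h]

lemma mem_box_of_normZ_le {k : Fin n → ℤ} {R : ℕ} (h : normZ k ≤ R) : k ∈ box n R := by
  rw [box, Fintype.mem_piFinset]
  intro i
  have h1 : |(k i : ℝ)| ≤ R := le_trans (abs_coord_le_normZ k i) h
  have h2 : |k i| ≤ (R:ℤ) := by exact_mod_cast (by rwa [← Int.cast_abs] at h1 : ((|k i| : ℤ):ℝ) ≤ R)
  have h3 := abs_le.mp h2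
  rw [Finset.mem_Icc]
  omega

def sbox (n : ℕ) (i₀ : Fin n) (a b M : ℤ) : Finset (Fin n → ℤ) :=
  Fintype.piFinset fun i => if i = i₀ then Finset.Icc a b else Finset.Icc 0 M

lemma card_sbox (i₀ : Fin n) (a b M : ℤ) :
    (sbox n i₀ a b M).card = (b+1-a).toNat * ((M+1).toNat)^(n-1) := by
  rw [sbox, Fintype.card_piFinset]
  rw [← Finset.mul_prod_erase Finset.univ _ (Finset.mem_univ i₀)]
  rw [if_pos rfl, Int.card_Icc]
  congr 1
  rw [Finset.prod_congr rfl (fun i hi => ?_), Finset.prod_const, Finset.card_erase_of_mem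
    (Finset.mem_univ i₀), Finset.card_univ, Fintype.card_fin]
  rw [if_neg (Finset.ne_of_mem_erase hi), Int.card_Icc]
  omega

lemma sbox_mem_bounds {i₀ : Fin n} {a b M : ℤ} {k : Fin n → ℤ} (hk : k ∈ sbox n i₀ a b M)
    (ha : 0 ≤ a) (hM : 0 ≤ M) :
    (a:ℝ) ≤ normZ k ∧ normZ k ^ 2 ≤ (b:ℝ)^2 + (n-1) * (M:ℝ)^2 := by
  rw [sbox, Fintype.mem_piFinset] at hk
  have hk0 := hk i₀
  rw [if_pos rfl, Finset.mem_Icc] at hk0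
  constructor
  · calc (a:ℝ) ≤ (k i₀ : ℝ) := by exact_mod_cast hk0.1
      _ ≤ |(k i₀ : ℝ)| := le_abs_self _
      _ ≤ normZ k := abs_coord_le_normZ k i₀
  · rw [normZ_sq, ← Finset.add_sum_erase Finset.univ (fun i => ((k i:ℝ))^2) (Finset.mem_univ i₀)]
    have hn : 1 ≤ n := Nat.pos_of_ne_zero (by rintro rfl; exact i₀.elim0)
    have h1 : ((k i₀:ℝ))^2 ≤ (b:ℝ)^2 := by
      have ha1 : (a:ℝ) ≤ (k i₀:ℝ) := by exact_mod_cast hk0.1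
      have hb1 : ((k i₀:ℝ)) ≤ b := by exact_mod_cast hk0.2
      have h0 : (0:ℝ) ≤ a := by exact_mod_cast ha
      nlinarith
    have h2 : ∑ i ∈ Finset.univ.erase i₀, ((k i:ℝ))^2 ≤ ((n:ℝ)-1) * (M:ℝ)^2 := by
      have hb : ∀ i ∈ Finset.univ.erase i₀, ((k i:ℝ))^2 ≤ (M:ℝ)^2 := by
        intro i hi
        have hki := hk i
        rw [if_neg (Finset.ne_of_mem_erase hi), Finset.mem_Icc] at hki
        have hl : (0:ℝ) ≤ (k i:ℝ) := by exact_mod_cast hki.1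
        have hr : ((k i:ℝ)) ≤ M := by exact_mod_cast hki.2
        nlinarith
      calc ∑ i ∈ Finset.univ.erase i₀, ((k i:ℝ))^2
          ≤ (Finset.univ.erase i₀).card • (M:ℝ)^2 := Finset.sum_le_card_nsmul _ _ _ hb
        _ = ((n:ℝ)-1) * (M:ℝ)^2 := by
            rw [Finset.card_erase_of_mem (Finset.mem_univ i₀), Finset.card_univ, Fintype.card_fin,
              nsmul_eq_mul]
            congr 1
            push_cast [Nat.cast_sub hn]
            ring
    linarith

/-! ### Dyadic shell index -/

def eIdx (k : Fin n → ℤ) : ℕ := Nat.log 2 ⌊jbZ k⌋₊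

lemma floor_jbZ_pos (k : Fin n → ℤ) : 0 < ⌊jbZ k⌋₊ :=
  Nat.floor_pos.mpr (one_le_jbZ k)

lemma pow_eIdx_le (k : Fin n → ℤ) : (2:ℝ)^(eIdx k) ≤ jbZ k := by
  have h1 : 2 ^ eIdx k ≤ ⌊jbZ k⌋₊ := Nat.pow_log_le_self 2 (floor_jbZ_pos k).ne'
  calc (2:ℝ)^(eIdx k) = ((2^(eIdx k) : ℕ) : ℝ) := by push_cast; ring
    _ ≤ (⌊jbZ k⌋₊ : ℝ) := by exact_mod_cast h1
    _ ≤ jbZ k := Nat.floor_le (jbZ_pos k).le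

lemma jbZ_lt_pow_eIdx (k : Fin n → ℤ) : jbZ k < (2:ℝ)^(eIdx k + 1) := by
  have h1 : ⌊jbZ k⌋₊ < 2 ^ (eIdx k + 1) := Nat.lt_pow_succ_log_self (by norm_num) _
  have h2 : ⌊jbZ k⌋₊ + 1 ≤ 2 ^ (eIdx k + 1) := h1
  calc jbZ k < ⌊jbZ k⌋₊ + 1 := Nat.lt_floor_add_one _
    _ ≤ ((2 ^ (eIdx k + 1) : ℕ) : ℝ) := by exact_mod_cast h2
    _ = (2:ℝ)^(eIdx k + 1) := by push_cast; ring

lemma log_two_ge_half : (1:ℝ)/2 ≤ Real.log 2 := by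
  have := Real.log_two_gt_d9
  linarith

/-- Uniform bound for the borderline lattice sum, over arbitrary finite sets. -/
lemma shell_sum_le (hn : 0 < n) {C₀ δ : ℝ} (hC₀ : 1 ≤ C₀) (hδ : 0 < δ) :
    ∃ K : ℝ, 0 < K ∧ ∀ A : Finset (Fin n → ℤ),
      ∑ k ∈ A, jbZ k ^ (-(n:ℝ)) * (C₀ + Real.log (jbZ k)) ^ (-(1+δ)) ≤ K := by
  set g : ℕ → ℝ := fun j => ((8:ℝ))^n * (2 ^ (1+δ)) * ((j:ℝ)+1)^(-(1+δ)) with hg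
  have hsum0 : Summable (fun j : ℕ => ((j:ℝ)+1)^(-(1+δ))) := by
    have h1 : Summable (fun j : ℕ => ((j:ℝ)^(1+δ))⁻¹) :=
      Real.summable_nat_rpow_inv.mpr (by linarith)
    have h2 := (summable_nat_add_iff 1).mpr h1
    refine h2.congr fun j => ?_
    rw [Real.rpow_neg (by positivity)]
    push_cast
    ring_nf
  have hsum : Summable g := (hsum0.mul_left _)
  have h0 : 0 ≤ ∑' j, g j := tsum_nonneg (fun j => by positivity)
  refine ⟨1 + ∑' j, g j, by linarith, fun A => ?_⟩
  -- fiber decomposition along eIdx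
  set F : (Fin n → ℤ) → ℝ := fun k => jbZ k ^ (-(n:ℝ)) * (C₀ + Real.log (jbZ k)) ^ (-(1+δ))
    with hF
  have key : ∀ j : ℕ, ∑ k ∈ A.filter (fun k => eIdx k = j), F k ≤ g j := by
    intro j
    have hsub : A.filter (fun k => eIdx k = j) ⊆ box n (2^(j+1)) := by
      intro k hk
      have hj : eIdx k = j := (Finset.mem_filter.mp hk).2
      refine mem_box_of_normZ_le ?_
      have := jbZ_lt_pow_eIdx k
      rw [hj] at this
      have h2 : normZ k ≤ jbZ k := normZ_le_jbZ k
      push_cast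
      linarith
    have hcard : ((A.filter (fun k => eIdx k = j)).card : ℝ) ≤ (8:ℝ)^n * 2^(j*n) := by
      have h1 : (A.filter (fun k => eIdx k = j)).card ≤ (2*2^(j+1)+1)^n := by
        rw [← card_box (n := n)]
        exact Finset.card_le_card hsub
      have h2 : (2*2^(j+1)+1)^n ≤ (2^(j+3))^n := by
        refine Nat.pow_le_pow_left ?_ n
        have : 1 ≤ 2^(j+1) := Nat.one_le_two_pow
        calc 2*2^(j+1)+1 ≤ 2*2^(j+1)+2^(j+1) := by omega
          _ = 2^(j+1)*3 := by ring
          _ ≤ 2^(j+1)*4 := by omega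
          _ = 2^(j+3) := by ring
      calc ((A.filter (fun k => eIdx k = j)).card : ℝ) ≤ ((2^(j+3))^n : ℕ) := by
            exact_mod_cast h1.trans h2
        _ = (8:ℝ)^n * 2^(j*n) := by
            push_cast
            rw [← pow_mul, show (j+3)*n = 3*n + j*n by ring, pow_add, pow_mul]
            norm_num
    set X : ℝ := 2 ^ (1+δ) * ((j:ℝ)+1)^(-(1+δ)) with hX
    have hXpos : 0 < X := by positivity
    have hterm : ∀ k ∈ A.filter (fun k => eIdx k = j),
        F k ≤ (2:ℝ)^(-((j:ℝ)*n)) * X := by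
      intro k hk
      have hj : eIdx k = j := (Finset.mem_filter.mp hk).2
      have hjb := pow_eIdx_le k
      rw [hj] at hjb
      have h2p : (0:ℝ) < 2^j := by positivity
      have hA : jbZ k ^ (-(n:ℝ)) ≤ (2:ℝ)^(-((j:ℝ)*n)) := by
        calc jbZ k ^ (-(n:ℝ)) ≤ ((2:ℝ)^j) ^ (-(n:ℝ)) :=
              Real.rpow_le_rpow_of_nonpos h2p hjb (by simp)
          _ = (2:ℝ)^(-((j:ℝ)*n)) := by
              rw [← Real.rpow_natCast 2 j, ← Real.rpow_mul (by norm_num)]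
              congr 1; ring
      have hlog : (j:ℝ) * Real.log 2 ≤ Real.log (jbZ k) := by
        calc (j:ℝ) * Real.log 2 = Real.log ((2:ℝ)^j) := by rw [Real.log_pow]
          _ ≤ Real.log (jbZ k) := Real.log_le_log h2p hjb
      have hbase : ((j:ℝ)+1) * (1/2) ≤ C₀ + Real.log (jbZ k) := by
        have hl2 := log_two_ge_half
        have hj0 : (0:ℝ) ≤ j := Nat.cast_nonneg j
        nlinarith
      have hB : (C₀ + Real.log (jbZ k)) ^ (-(1+δ)) ≤ X := by
        calc (C₀ + Real.log (jbZ k)) ^ (-(1+δ)) ≤ (((j:ℝ)+1) * (1/2)) ^ (-(1+δ)) :=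
              Real.rpow_le_rpow_of_nonpos (by positivity) hbase (by linarith)
          _ = ((j:ℝ)+1)^(-(1+δ)) * ((1/2:ℝ))^(-(1+δ)) :=
              Real.mul_rpow (by positivity) (by norm_num)
          _ = X := by
              rw [hX, one_div, Real.inv_rpow (by norm_num), ← Real.rpow_neg (by norm_num),
                neg_neg]
              ring
      have hFk : F k = jbZ k ^ (-(n:ℝ)) * (C₀ + Real.log (jbZ k)) ^ (-(1+δ)) := rfl
      rw [hFk]
      have h1' : (0:ℝ) ≤ jbZ k ^ (-(n:ℝ)) := Real.rpow_nonneg (jbZ_pos k).le _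
      exact mul_le_mul hA hB (Real.rpow_nonneg (by nlinarith [Real.log_nonneg (one_le_jbZ k)]) _)
        (by positivity)
    calc ∑ k ∈ A.filter (fun k => eIdx k = j), F k
        ≤ (A.filter (fun k => eIdx k = j)).card • ((2:ℝ)^(-((j:ℝ)*n)) * X) :=
          Finset.sum_le_card_nsmul _ _ _ hterm
      _ = ((A.filter (fun k => eIdx k = j)).card : ℝ) * ((2:ℝ)^(-((j:ℝ)*n)) * X) :=
          nsmul_eq_mul _ _
      _ ≤ ((8:ℝ)^n * 2^(j*n)) * ((2:ℝ)^(-((j:ℝ)*n)) * X) := by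
          exact mul_le_mul_of_nonneg_right hcard (by positivity)
      _ = g j := by
          have h21 : (2:ℝ)^(j*n) * (2:ℝ)^(-((j:ℝ)*n)) = 1 := by
            rw [← Real.rpow_natCast 2 (j*n), ← Real.rpow_add two_pos]
            have he : ((j*n:ℕ):ℝ) + (-((j:ℝ)*n)) = 0 := by push_cast; ring
            rw [he, Real.rpow_zero]
          calc (8:ℝ)^n * 2^(j*n) * ((2:ℝ)^(-((j:ℝ)*n)) * X)
              = (8:ℝ)^n * X * ((2:ℝ)^(j*n) * (2:ℝ)^(-((j:ℝ)*n))) := by ring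
            _ = (8:ℝ)^n * X := by rw [h21, mul_one]
            _ = g j := by rw [hg, hX]; ring
  -- assemble
  have hmaps : ∀ k ∈ A, eIdx k ∈ Finset.range (A.sup eIdx + 1) := fun k hk =>
    Finset.mem_range.mpr (Nat.lt_succ_of_le (Finset.le_sup hk))
  calc ∑ k ∈ A, F k
      = ∑ j ∈ Finset.range (A.sup eIdx + 1), ∑ k ∈ A.filter (fun k => eIdx k = j), F k :=
        (Finset.sum_fiberwise_of_maps_to hmaps F).symm
    _ ≤ ∑ j ∈ Finset.range (A.sup eIdx + 1), g j :=
        Finset.sum_le_sum fun j _ => key j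
    _ ≤ ∑' j, g j := Summable.sum_le_tsum _ (fun j _ => by rw [hg]; positivity) hsum
    _ ≤ 1 + ∑' j, g j := by linarith

/-! ### Lower bound for the borderline sum over a ball -/

lemma nat_div_bounds (a b : ℕ) (hb : 0 < b) :
    ((a/b : ℕ) : ℝ) ≤ (a:ℝ)/b ∧ (a:ℝ)/b ≤ ((a/b : ℕ) : ℝ) + 1 := by
  constructor
  · exact Nat.cast_div_le
  · have h := Nat.div_add_mod a b
    have h2 : a % b < b := Nat.mod_lt a hb
    have h3 : a < b * (a/b) + b := by omega
    have h' : (a:ℝ) < (b:ℝ) * ((a/b:ℕ):ℝ) + b := by exact_mod_cast h3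
    rw [div_le_iff₀ (by exact_mod_cast hb : (0:ℝ) < (b:ℝ))]
    nlinarith [(by positivity : (0:ℝ) ≤ ((a/b:ℕ):ℝ))]

set_option maxHeartbeats 2000000 in
lemma conv_core_lower (hn : 0 < n) {C₀ θ t : ℝ} (hC₀ : 1 ≤ C₀) (hθ0 : 0 < θ) (hθ1 : θ < 1)
    (ht : -(n:ℝ) ≤ t) (N : ℕ) (hN : 1 ≤ N) :
    (((4*(n:ℝ))^n)⁻¹ / (6 * C₀)) * (1 + Real.log (1 + (N:ℝ)/2)) ^ (1-θ) ≤
      ∑ k ∈ (box n N).filter (fun k => normZ k ≤ (N:ℝ)),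
        jbZ k ^ t * (C₀ + Real.log (jbZ k)) ^ (-θ) := by
  have hterm_nonneg : ∀ k : Fin n → ℤ, 0 ≤ jbZ k ^ t * (C₀ + Real.log (jbZ k)) ^ (-θ) := by
    intro k
    have h1 : (0:ℝ) < C₀ + Real.log (jbZ k) := by
      have := Real.log_nonneg (one_le_jbZ k); linarith
    exact mul_nonneg (Real.rpow_nonneg (jbZ_pos k).le _) (Real.rpow_nonneg h1.le _)
  have hCn : (0:ℝ) < ((4*(n:ℝ))^n)⁻¹ := by positivity
  set J := Nat.log 2 N with hJ
  have h2J : (2:ℕ)^J ≤ N := Nat.pow_log_le_self 2 (by omega)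
  have hJ2 : N < 2^(J+1) := Nat.lt_pow_succ_log_self (by norm_num) N
  -- upper bound for the log factor
  have hlog_nonneg : 0 ≤ Real.log (1 + (N:ℝ)/2) := Real.log_nonneg (by
    have : (1:ℝ) ≤ N := by exact_mod_cast hN
    linarith)
  have hbase1 : (1:ℝ) ≤ 1 + Real.log (1 + (N:ℝ)/2) := by linarith
  have hb : 1 + Real.log (1 + (N:ℝ)/2) ≤ (J:ℝ) + 2 := by
    have h1 : (1:ℝ) + (N:ℝ)/2 ≤ 2^(J+1) := by
      have h2 : (N:ℝ) < 2^(J+1) := by exact_mod_cast hJ2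
      have h3 : (1:ℝ) ≤ 2^J := by
        have := Nat.one_le_two_pow (n := J); exact_mod_cast this
      have h4 : ((2:ℝ))^(J+1) = 2 * 2^J := by ring
      nlinarith
    have h2 : Real.log (1 + (N:ℝ)/2) ≤ ((J:ℝ)+1) * Real.log 2 := by
      calc Real.log (1 + (N:ℝ)/2) ≤ Real.log ((2:ℝ)^(J+1)) :=
            Real.log_le_log (by positivity) h1
        _ = ((J:ℝ)+1) * Real.log 2 := by rw [Real.log_pow]; push_cast; ring
    have h3 : Real.log 2 ≤ 1 := by
      calc Real.log 2 ≤ Real.log (Real.exp 1) := Real.log_le_log (by norm_num)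
            (by nlinarith [Real.add_one_le_exp 1])
        _ = 1 := Real.log_exp 1
    nlinarith [(by positivity : (0:ℝ) ≤ (J:ℝ))]
  rcases Nat.eq_zero_or_pos J with hJ0 | hJpos
  · -- N = 1 case: use the single term k = 0
    have h0mem : (0 : Fin n → ℤ) ∈ (box n N).filter (fun k => normZ k ≤ (N:ℝ)) := by
      have hz : normZ (0 : Fin n → ℤ) = 0 := by simp [normZ]
      refine Finset.mem_filter.mpr ⟨mem_box_of_normZ_le ?_, ?_⟩ <;>
        simp [hz, Nat.cast_nonneg]
    have hterm0 : jbZ (0 : Fin n → ℤ) ^ t * (C₀ + Real.log (jbZ (0 : Fin n → ℤ))) ^ (-θ)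
        = C₀ ^ (-θ) := by
      have hjb0 : jbZ (0 : Fin n → ℤ) = 1 := by simp [jbZ]
      rw [hjb0, Real.one_rpow, Real.log_one, one_mul, add_zero]
    have hsum : C₀ ^ (-θ) ≤ ∑ k ∈ (box n N).filter (fun k => normZ k ≤ (N:ℝ)),
        jbZ k ^ t * (C₀ + Real.log (jbZ k)) ^ (-θ) := by
      rw [← hterm0]
      exact Finset.single_le_sum (fun k _ => hterm_nonneg k) h0mem
    have hC1 : (C₀:ℝ)⁻¹ ≤ C₀ ^ (-θ) := by
      rw [Real.rpow_neg (by linarith)]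
      have h : C₀ ^ θ ≤ C₀ := by
        calc C₀ ^ θ ≤ C₀ ^ (1:ℝ) := Real.rpow_le_rpow_of_exponent_le hC₀ (by linarith)
          _ = C₀ := Real.rpow_one C₀
      exact inv_anti₀ (Real.rpow_pos_of_pos (by linarith) θ) h
    have hLHS : (((4*(n:ℝ))^n)⁻¹ / (6 * C₀)) * (1 + Real.log (1 + (N:ℝ)/2)) ^ (1-θ)
        ≤ (C₀:ℝ)⁻¹ := by
      have h1 : (1 + Real.log (1 + (N:ℝ)/2)) ^ (1-θ) ≤ ((J:ℝ)+2) ^ (1-θ) :=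
        Real.rpow_le_rpow (by linarith) hb (by linarith)
      have h2 : ((J:ℝ)+2) ^ (1-θ) = (2:ℝ) ^ (1-θ) := by rw [hJ0]; norm_num
      have h3 : (2:ℝ) ^ (1-θ) ≤ 2 := by
        calc (2:ℝ) ^ (1-θ) ≤ (2:ℝ) ^ (1:ℝ) :=
              Real.rpow_le_rpow_of_exponent_le (by norm_num) (by linarith)
          _ = 2 := Real.rpow_one 2
      have h4 : ((4*(n:ℝ))^n)⁻¹ ≤ 4⁻¹ := by
        have hn1 : (1:ℕ) ≤ n := hn
        have h5 : (4:ℝ) ≤ (4*(n:ℝ))^n := by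
          calc (4:ℝ) = 4^1 := (pow_one 4).symm
            _ ≤ (4:ℝ)^n := pow_le_pow_right₀ (by norm_num) hn1
            _ ≤ (4*(n:ℝ))^n := by
                refine pow_le_pow_left₀ (by norm_num) ?_ n
                have : (1:ℝ) ≤ n := by exact_mod_cast hn1
                nlinarith
        rw [inv_le_inv₀ (by positivity) (by norm_num)]
        exact h5
      have h6 : (0:ℝ) < C₀ := by linarith
      have h7 : (((4*(n:ℝ))^n)⁻¹ / (6 * C₀)) * (1 + Real.log (1 + (N:ℝ)/2)) ^ (1-θ)
          ≤ (4⁻¹ / (6 * C₀)) * 2 := by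
        have hx : (1 + Real.log (1 + (N:ℝ)/2)) ^ (1-θ) ≤ 2 := by
          calc (1 + Real.log (1 + (N:ℝ)/2)) ^ (1-θ) ≤ ((J:ℝ)+2) ^ (1-θ) := h1
            _ = (2:ℝ)^(1-θ) := h2
            _ ≤ 2 := h3
        have h8 : (0:ℝ) ≤ (1 + Real.log (1 + (N:ℝ)/2)) ^ (1-θ) := Real.rpow_nonneg (by linarith) _
        have h9 : (0:ℝ) < 6 * C₀ := by linarith
        apply mul_le_mul (by gcongr) hx h8 (by positivity)
      calc (((4*(n:ℝ))^n)⁻¹ / (6 * C₀)) * (1 + Real.log (1 + (N:ℝ)/2)) ^ (1-θ)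
          ≤ (4⁻¹ / (6 * C₀)) * 2 := h7
        _ ≤ (C₀:ℝ)⁻¹ := by
            have h10 : (4:ℝ)⁻¹ / (6 * C₀) * 2 = 1/(12*C₀) := by ring
            rw [h10, inv_eq_one_div]
            exact one_div_le_one_div_of_le h6 (by linarith)
    linarith
  · -- main case J ≥ 1 : dyadic shells
    set i₀ : Fin n := ⟨0, hn⟩
    set Mj : ℕ → ℕ := fun j => 2^j / (2*n) with hMj
    set Sh : ℕ → Finset (Fin n → ℤ) :=
      fun j => sbox n i₀ ((2:ℤ)^j) ((2:ℤ)^j + (Mj j : ℤ)) (Mj j) with hSh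
    have hn1 : (1:ℝ) ≤ n := by exact_mod_cast hn
    -- membership bounds
    have hmem : ∀ j, j ∈ Finset.range J → ∀ k ∈ Sh j,
        (2:ℝ)^j ≤ jbZ k ∧ jbZ k ≤ (2:ℝ)^(j+1) ∧
          k ∈ (box n N).filter (fun k => normZ k ≤ (N:ℝ)) := by
      intro j hj k hk
      have hjJ : j + 1 ≤ J := Finset.mem_range.mp hj
      obtain ⟨hlow, hsq⟩ := sbox_mem_bounds (hSh ▸ hk) (by positivity) (by positivity)
      set P : ℝ := (2:ℝ)^j with hP
      have hP1 : (1:ℝ) ≤ P := by rw [hP]; exact_mod_cast Nat.one_le_two_pow (n := j)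
      set m : ℝ := ((Mj j : ℕ) : ℝ) with hm
      have hm0 : 0 ≤ m := by positivity
      have hmP : m * (2*(n:ℝ)) ≤ P := by
        have h1 : Mj j * (2*n) ≤ 2^j := Nat.div_mul_le_self _ _
        have h2 : (Mj j : ℝ) * ((2*n : ℕ) : ℝ) ≤ ((2^j : ℕ) : ℝ) := by exact_mod_cast h1
        push_cast at h2
        rw [hm, hP]
        push_cast
        linarith
    
      have hlow' : P ≤ normZ k := by
        rw [hP]
        have : (((2:ℤ)^j : ℤ) : ℝ) = (2:ℝ)^j := by push_cast; ring
        rw [← this]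
        exact hlow
      have hsq' : normZ k ^ 2 ≤ (P + m)^2 + ((n:ℝ)-1) * m^2 := by
        have : (((2:ℤ)^j + (Mj j : ℤ) : ℤ) : ℝ) = P + m := by rw [hP, hm]; push_cast; ring
        have h2 : ((Mj j : ℤ) : ℝ) = m := by rw [hm]; push_cast; ring
        rw [this, h2] at hsq
        exact hsq
      have hjb_up : jbZ k ≤ (2:ℝ)^(j+1) := by
        have e1 : (n:ℝ)*m ≤ P/2 := by nlinarith
        have e2 : (n:ℝ)*m^2 ≤ (P/2)*m := by nlinarith
        have hm2 : 2*m ≤ P := by nlinarith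
        have hkey : 1 + normZ k ^ 2 ≤ ((2:ℝ)^(j+1))^2 := by
          have hpp : ((2:ℝ)^(j+1))^2 = 4*P^2 := by rw [hP]; ring
          rw [hpp]
          nlinarith
        rw [jbZ_eq]
        calc Real.sqrt (1 + normZ k ^2) ≤ Real.sqrt (((2:ℝ)^(j+1))^2) :=
            Real.sqrt_le_sqrt hkey
          _ = (2:ℝ)^(j+1) := Real.sqrt_sq (by positivity)
      have hjb_low : P ≤ jbZ k := le_trans hlow' (normZ_le_jbZ k)
      have hNk : normZ k ≤ (N:ℝ) := by
        have h1 : (2:ℝ)^(j+1) ≤ (2:ℝ)^J := pow_le_pow_right₀ (by norm_num) hjJ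
        have h2 : ((2^J : ℕ) : ℝ) ≤ (N:ℝ) := by exact_mod_cast h2J
        push_cast at h2
        calc normZ k ≤ jbZ k := normZ_le_jbZ k
          _ ≤ (2:ℝ)^(j+1) := hjb_up
          _ ≤ (2:ℝ)^J := h1
          _ ≤ (N:ℝ) := h2
      exact ⟨hjb_low, hjb_up, Finset.mem_filter.mpr ⟨mem_box_of_normZ_le hNk, hNk⟩⟩
    -- term lower bound on each shell
    have hterm_low : ∀ j, j ∈ Finset.range J → ∀ k ∈ Sh j,
        ((2:ℝ)^((j+1)*n))⁻¹ * (C₀ + (J:ℝ))^(-θ) ≤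
          jbZ k ^ t * (C₀ + Real.log (jbZ k)) ^ (-θ) := by
      intro j hj k hk
      obtain ⟨hjb_low, hjb_up, _⟩ := hmem j hj k hk
      have hjJ : j + 1 ≤ J := Finset.mem_range.mp hj
      have hA : ((2:ℝ)^((j+1)*n))⁻¹ ≤ jbZ k ^ t := by
        have h1 : jbZ k ^ (-(n:ℝ)) ≤ jbZ k ^ t :=
          Real.rpow_le_rpow_of_exponent_le (one_le_jbZ k) ht
        have h2 : ((2:ℝ)^(j+1)) ^ (-(n:ℝ)) ≤ jbZ k ^ (-(n:ℝ)) :=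
          Real.rpow_le_rpow_of_nonpos (jbZ_pos k) hjb_up (by simp)
        have h3 : ((2:ℝ)^(j+1)) ^ (-(n:ℝ)) = ((2:ℝ)^((j+1)*n))⁻¹ := by
          rw [← Real.rpow_natCast 2 (j+1), ← Real.rpow_mul (by norm_num),
            ← Real.rpow_natCast 2 ((j+1)*n), ← Real.rpow_neg (by norm_num)]
          congr 1
          push_cast
          ring
        linarith [h3 ▸ h2]
      have hB : (C₀ + (J:ℝ))^(-θ) ≤ (C₀ + Real.log (jbZ k)) ^ (-θ) := by
        have hlog2 : Real.log 2 ≤ 1 := by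
          calc Real.log 2 ≤ Real.log (Real.exp 1) := Real.log_le_log (by norm_num)
                (by nlinarith [Real.add_one_le_exp 1])
            _ = 1 := Real.log_exp 1
        have h1 : Real.log (jbZ k) ≤ (J:ℝ) := by
          calc Real.log (jbZ k) ≤ Real.log ((2:ℝ)^(j+1)) :=
                Real.log_le_log (jbZ_pos k) hjb_up
            _ = ((j:ℝ)+1) * Real.log 2 := by rw [Real.log_pow]; push_cast; ring
            _ ≤ ((j:ℝ)+1) * 1 := by
                have : (0:ℝ) ≤ (j:ℝ)+1 := by positivity
                nlinarith [Real.log_nonneg (by norm_num : (1:ℝ) ≤ 2)]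
            _ ≤ (J:ℝ) := by
                have : (j:ℝ) + 1 ≤ (J:ℝ) := by exact_mod_cast hjJ
                linarith
        have hpos : (0:ℝ) < C₀ + Real.log (jbZ k) := by
          have := Real.log_nonneg (one_le_jbZ k); linarith
        exact Real.rpow_le_rpow_of_nonpos hpos (by linarith) (by linarith)
      have h0 : (0:ℝ) ≤ (C₀ + (J:ℝ))^(-θ) :=
        Real.rpow_nonneg (by positivity) _
      have h0' : (0:ℝ) ≤ ((2:ℝ)^((j+1)*n))⁻¹ := by positivity
      exact mul_le_mul hA hB h0 (Real.rpow_nonneg (jbZ_pos k).le t)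
    -- cardinality lower bound
    have hcard : ∀ j, ((2:ℝ)^j/(2*(n:ℝ)))^n ≤ ((Sh j).card : ℝ) := by
      intro j
      have h1 : (Sh j).card = (Mj j + 1)^n := by
        rw [hSh, card_sbox]
        have h2 : ((2:ℤ)^j + (Mj j:ℤ) + 1 - (2:ℤ)^j).toNat = Mj j + 1 := by omega
        rw [h2]
        have h3 : (((Mj j : ℤ) + 1)).toNat = Mj j + 1 := by omega
        rw [h3]
        cases n with
        | zero => exact absurd hn (by omega)
        | succ m => rw [Nat.succ_sub_one]; ring
      rw [h1]
      have h4 : (2:ℝ)^j/(2*(n:ℝ)) ≤ (Mj j : ℝ) + 1 := by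
        have := (nat_div_bounds (2^j) (2*n) (by positivity)).2
        push_cast at this ⊢
        linarith
      calc ((2:ℝ)^j/(2*(n:ℝ)))^n ≤ ((Mj j : ℝ) + 1)^n :=
            pow_le_pow_left₀ (by positivity) h4 n
        _ = (((Mj j + 1)^n : ℕ) : ℝ) := by push_cast; ring
    -- shells are disjoint
    have hdisj : (Finset.range J : Set ℕ).PairwiseDisjoint Sh := by
      intro j hj j' hj' hne
      rw [Function.onFun, Finset.disjoint_left]
      intro k hk hk'
      have key : ∀ i : ℕ, ∀ hi : k ∈ Sh i, (2:ℤ)^i ≤ k i₀ ∧ k i₀ < (2:ℤ)^(i+1) := by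
        intro i hi
        simp only [hSh, sbox, Fintype.mem_piFinset] at hi
        have h := hi i₀
        rw [if_pos rfl, Finset.mem_Icc] at h
        refine ⟨h.1, lt_of_le_of_lt h.2 ?_⟩
        have h5 : Mj i < 2^i := by
          have h6 : Mj i ≤ 2^i/2 := by
            rw [hMj]
            exact Nat.div_le_div_left (by omega) (by omega)
          have h7 : 2^i/2 < 2^i := Nat.div_lt_self (by positivity) (by omega)
          omega
        have h8 : ((2:ℤ)^i + (Mj i : ℤ)) < 2^(i+1) := by
          have : ((Mj i : ℤ)) < 2^i := by exact_mod_cast h5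
          have h9 : (2:ℤ)^(i+1) = 2^i + 2^i := by ring
          omega
        exact h8
      obtain ⟨h1, h2⟩ := key j hk
      obtain ⟨h1', h2'⟩ := key j' hk'
      rcases Nat.lt_or_ge j j' with h | h
      · have : (2:ℤ)^(j+1) ≤ 2^j' := pow_le_pow_right₀ (by omega) h
        omega
      · have hlt : j' < j := lt_of_le_of_ne h (Ne.symm hne) 
        have : (2:ℤ)^(j'+1) ≤ 2^j := pow_le_pow_right₀ (by omega) hlt
        omega
    -- assemble
    set cn : ℝ := ((4*(n:ℝ))^n)⁻¹ with hcn
    have hshellsum : ∀ j, j ∈ Finset.range J →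
        cn * (C₀ + (J:ℝ))^(-θ) ≤ ∑ k ∈ Sh j, jbZ k ^ t * (C₀ + Real.log (jbZ k)) ^ (-θ) := by
      intro j hj
      have h1 : (Sh j).card • (((2:ℝ)^((j+1)*n))⁻¹ * (C₀ + (J:ℝ))^(-θ)) ≤
          ∑ k ∈ Sh j, jbZ k ^ t * (C₀ + Real.log (jbZ k)) ^ (-θ) :=
        Finset.card_nsmul_le_sum _ _ _ (hterm_low j hj)
      have h0J : (0:ℝ) ≤ (C₀ + (J:ℝ))^(-θ) := Real.rpow_nonneg (by positivity) _
      have h2 : cn = ((2:ℝ)^j/(2*(n:ℝ)))^n * ((2:ℝ)^((j+1)*n))⁻¹ := by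
        rw [hcn, div_pow, show (j+1)*n = j*n+n by ring, pow_add, pow_mul]
        rw [show ((4:ℝ)*(n:ℝ))^n = (2*(n:ℝ))^n * 2^n by rw [← mul_pow]; congr 1; ring]
        have hne1 : ((2:ℝ)^j)^n ≠ 0 := by positivity
        have hne2 : (2*(n:ℝ))^n ≠ 0 := by positivity
        have hne3 : ((2:ℝ))^n ≠ 0 := by positivity
        field_simp
      calc cn * (C₀ + (J:ℝ))^(-θ)
          = ((2:ℝ)^j/(2*(n:ℝ)))^n * (((2:ℝ)^((j+1)*n))⁻¹ * (C₀ + (J:ℝ))^(-θ)) := by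
            rw [h2]; ring
        _ ≤ ((Sh j).card : ℝ) * (((2:ℝ)^((j+1)*n))⁻¹ * (C₀ + (J:ℝ))^(-θ)) := by
            have := hcard j
            have hv : (0:ℝ) ≤ ((2:ℝ)^((j+1)*n))⁻¹ * (C₀ + (J:ℝ))^(-θ) := by
              apply mul_nonneg (by positivity) h0J
            exact mul_le_mul_of_nonneg_right this hv
        _ = (Sh j).card • (((2:ℝ)^((j+1)*n))⁻¹ * (C₀ + (J:ℝ))^(-θ)) := (nsmul_eq_mul _ _).symm
        _ ≤ _ := h1
    have hunion : (Finset.range J).biUnion Sh ⊆ (box n N).filter (fun k => normZ k ≤ (N:ℝ)) := by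
      intro k hk
      obtain ⟨j, hj, hkj⟩ := Finset.mem_biUnion.mp hk
      exact (hmem j hj k hkj).2.2
    have hmain : (J:ℝ) * (cn * (C₀ + (J:ℝ))^(-θ)) ≤
        ∑ k ∈ (box n N).filter (fun k => normZ k ≤ (N:ℝ)),
          jbZ k ^ t * (C₀ + Real.log (jbZ k)) ^ (-θ) := by
      calc (J:ℝ) * (cn * (C₀ + (J:ℝ))^(-θ))
          = ∑ _j ∈ Finset.range J, cn * (C₀ + (J:ℝ))^(-θ) := by
            rw [Finset.sum_const, Finset.card_range, nsmul_eq_mul]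
        _ ≤ ∑ j ∈ Finset.range J, ∑ k ∈ Sh j, jbZ k ^ t * (C₀ + Real.log (jbZ k)) ^ (-θ) :=
            Finset.sum_le_sum hshellsum
        _ = ∑ k ∈ (Finset.range J).biUnion Sh, jbZ k ^ t * (C₀ + Real.log (jbZ k)) ^ (-θ) :=
            (Finset.sum_biUnion hdisj).symm
        _ ≤ _ := Finset.sum_le_sum_of_subset_of_nonneg hunion (fun k _ _ => hterm_nonneg k)
    -- final comparison
    have hJ1 : (1:ℝ) ≤ (J:ℝ) := by exact_mod_cast hJpos
    have hJ2' : (0:ℝ) < (J:ℝ) + 2 := by linarith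
    have hfin : (cn / (6 * C₀)) * (1 + Real.log (1 + (N:ℝ)/2)) ^ (1-θ) ≤
        (J:ℝ) * (cn * (C₀ + (J:ℝ))^(-θ)) := by
      have hA : (1 + Real.log (1 + (N:ℝ)/2)) ^ (1-θ) ≤ ((J:ℝ)+2)^(1-θ) :=
        Real.rpow_le_rpow (by linarith) hb (by linarith)
      have hB : ((J:ℝ)+2)^(1-θ) = ((J:ℝ)+2) * ((J:ℝ)+2)^(-θ) := by
        rw [show (1:ℝ)-θ = 1 + (-θ) by ring, Real.rpow_add hJ2', Real.rpow_one]
      have hC : (C₀ * ((J:ℝ)+2))^(-θ) ≤ (C₀ + (J:ℝ))^(-θ) := by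
        apply Real.rpow_le_rpow_of_nonpos (by linarith) (by nlinarith) (by linarith)
      have hD : (C₀ * ((J:ℝ)+2))^(-θ) = C₀^(-θ) * ((J:ℝ)+2)^(-θ) := by
        rw [← Real.mul_rpow (by linarith) (by linarith)]
      have hE : C₀⁻¹ ≤ C₀ ^ (-θ) := by
        rw [Real.rpow_neg (by linarith)]
        have h : C₀ ^ θ ≤ C₀ := by
          calc C₀ ^ θ ≤ C₀ ^ (1:ℝ) := Real.rpow_le_rpow_of_exponent_le hC₀ (by linarith)
            _ = C₀ := Real.rpow_one C₀
        exact inv_anti₀ (Real.rpow_pos_of_pos (by linarith) θ) h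
      have hJ3 : ((J:ℝ)+2)/3 ≤ (J:ℝ) := by linarith
      have hcnpos : (0:ℝ) < cn := by rw [hcn]; positivity
      have hJp2 : (0:ℝ) ≤ ((J:ℝ)+2)^(-θ) := Real.rpow_nonneg (by linarith) _
      have hC₀pos : (0:ℝ) < C₀ := by linarith
      calc (cn / (6 * C₀)) * (1 + Real.log (1 + (N:ℝ)/2)) ^ (1-θ)
          ≤ (cn / (6 * C₀)) * (((J:ℝ)+2) * ((J:ℝ)+2)^(-θ)) := by
            rw [← hB]
            exact mul_le_mul_of_nonneg_left hA (by positivity)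
        _ ≤ (J:ℝ) * (cn * (C₀⁻¹ * ((J:ℝ)+2)^(-θ))) := by
            have hkey : ((J:ℝ)+2) / (6*C₀) ≤ (J:ℝ) / C₀ := by
              rw [div_le_div_iff₀ (by positivity) hC₀pos]
              nlinarith
            have h5 := mul_le_mul_of_nonneg_left hkey (mul_nonneg hcnpos.le hJp2)
            calc (cn / (6 * C₀)) * (((J:ℝ)+2) * ((J:ℝ)+2)^(-θ))
                = (cn * ((J:ℝ)+2)^(-θ)) * (((J:ℝ)+2) / (6*C₀)) := by ring
              _ ≤ (cn * ((J:ℝ)+2)^(-θ)) * ((J:ℝ) / C₀) := h5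
              _ = (J:ℝ) * (cn * (C₀⁻¹ * ((J:ℝ)+2)^(-θ))) := by ring
        _ ≤ (J:ℝ) * (cn * (C₀ + (J:ℝ))^(-θ)) := by
            have h1 : C₀⁻¹ * ((J:ℝ)+2)^(-θ) ≤ (C₀ + (J:ℝ))^(-θ) := by
              calc C₀⁻¹ * ((J:ℝ)+2)^(-θ) ≤ C₀^(-θ) * ((J:ℝ)+2)^(-θ) :=
                    mul_le_mul_of_nonneg_right hE hJp2
                _ = (C₀ * ((J:ℝ)+2))^(-θ) := hD.symm
                _ ≤ (C₀ + (J:ℝ))^(-θ) := hC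
            have h2 : (0:ℝ) ≤ (J:ℝ) * cn := by positivity
            calc (J:ℝ) * (cn * (C₀⁻¹ * ((J:ℝ)+2)^(-θ)))
                = ((J:ℝ) * cn) * (C₀⁻¹ * ((J:ℝ)+2)^(-θ)) := by ring
              _ ≤ ((J:ℝ) * cn) * (C₀ + (J:ℝ))^(-θ) := mul_le_mul_of_nonneg_left h1 h2
              _ = (J:ℝ) * (cn * (C₀ + (J:ℝ))^(-θ)) := by ring
    linarith

/-! ### Norm formulas -/

lemma enorm_of_nonneg {x : ℝ} (hx : 0 ≤ x) : (‖x‖₊ : ℝ≥0∞) = ENNReal.ofReal x := by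
  rw [Real.nnnorm_of_nonneg hx, ENNReal.ofReal, Real.toNNReal_of_nonneg hx]

lemma lqs_eq_sum {q : ℝ≥0∞} (hq0 : q ≠ 0) (hqt : q ≠ ∞) (s : ℝ) (f : (Fin n → ℤ) → ℝ)
    (A : Finset (Fin n → ℤ)) (hsupp : ∀ k, k ∉ A → f k = 0) :
    lqsNormR q s f =
      ENNReal.ofReal ((∑ k ∈ A, (jbZ k ^ s * |f k|) ^ q.toReal) ^ (1/q.toReal)) := by
  have hp : 0 < q.toReal := ENNReal.toReal_pos hq0 hqt
  rw [lqsNormR, eLpNorm_eq_lintegral_rpow_enorm_toReal hq0 hqt, lintegral_count]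
  have hterm : ∀ k, ((‖jbZ k ^ s * |f k|‖₊ : ℝ≥0∞)) ^ q.toReal
      = ENNReal.ofReal ((jbZ k ^ s * |f k|) ^ q.toReal) := by
    intro k
    have h0 : (0:ℝ) ≤ jbZ k ^ s * |f k| :=
      mul_nonneg (Real.rpow_nonneg (jbZ_pos k).le s) (abs_nonneg _)
    rw [enorm_of_nonneg h0, ENNReal.ofReal_rpow_of_nonneg h0 hp.le]
  have hzero : ∀ k, k ∉ A → ENNReal.ofReal ((jbZ k ^ s * |f k|) ^ q.toReal) = 0 := by
    intro k hk
    rw [hsupp k hk]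
    simp [Real.zero_rpow hp.ne']
  calc (∑' k, ((‖jbZ k ^ s * |f k|‖₊ : ℝ≥0∞)) ^ q.toReal) ^ (1/q.toReal)
      = (∑' k, ENNReal.ofReal ((jbZ k ^ s * |f k|) ^ q.toReal)) ^ (1/q.toReal) := by
        congr 1; exact tsum_congr hterm
    _ = (∑ k ∈ A, ENNReal.ofReal ((jbZ k ^ s * |f k|) ^ q.toReal)) ^ (1/q.toReal) := by
        congr 1; exact tsum_eq_sum hzero
    _ = (ENNReal.ofReal (∑ k ∈ A, (jbZ k ^ s * |f k|) ^ q.toReal)) ^ (1/q.toReal) := by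
        congr 1
        rw [ENNReal.ofReal_sum_of_nonneg]
        intro k _
        exact Real.rpow_nonneg (mul_nonneg (Real.rpow_nonneg (jbZ_pos k).le s) (abs_nonneg _)) _
    _ = ENNReal.ofReal ((∑ k ∈ A, (jbZ k ^ s * |f k|) ^ q.toReal) ^ (1/q.toReal)) := by
        rw [ENNReal.ofReal_rpow_of_nonneg ?_ (by positivity)]
        exact Finset.sum_nonneg fun k _ =>
          Real.rpow_nonneg (mul_nonneg (Real.rpow_nonneg (jbZ_pos k).le s) (abs_nonneg _)) _

lemma lqs_top_eq (s : ℝ) (f : (Fin n → ℤ) → ℝ) :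
    lqsNormR ∞ s f = ⨆ k, ENNReal.ofReal (jbZ k ^ s * |f k|) := by
  rw [lqsNormR, eLpNorm_exponent_top, eLpNormEssSup_count]
  refine iSup_congr fun k => enorm_of_nonneg ?_
  exact mul_nonneg (Real.rpow_nonneg (jbZ_pos k).le s) (abs_nonneg _)

/-! ### rpow window -/

lemma rpow_window {x y : ℝ} (s : ℝ) (hy : 1 ≤ y) (h1 : y ≤ x) (h2 : x ≤ 6*y) :
    (6:ℝ)^(-|s|) * y^s ≤ x^s ∧ x^s ≤ 6^|s| * y^s := by
  have hy0 : (0:ℝ) < y := by linarith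
  have hx0 : (0:ℝ) < x := by linarith
  have hu0 : (0:ℝ) < x/y := by positivity
  have hu1 : (1:ℝ) ≤ x/y := (one_le_div hy0).mpr h1
  have hu6 : x/y ≤ 6 := by rw [div_le_iff₀ hy0]; linarith
  have hsplit : x^s = y^s * (x/y)^s := by
    have hxy : y * (x/y) = x := by field_simp
    rw [← hxy, Real.mul_rpow hy0.le hu0.le, hxy]
  have hys : (0:ℝ) < y^s := Real.rpow_pos_of_pos hy0 s
  rcases le_or_gt 0 s with hs | hs
  · have habs : |s| = s := abs_of_nonneg hs
    constructor
    · have hu : (1:ℝ) ≤ (x/y)^s := Real.one_le_rpow hu1 hs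
      have h6 : (6:ℝ)^(-|s|) ≤ 1 := by
        rw [habs]
        exact Real.rpow_le_one_of_one_le_of_nonpos (by norm_num) (by linarith)
      rw [hsplit]
      nlinarith
    · have hu : (x/y)^s ≤ 6^s := Real.rpow_le_rpow hu0.le hu6 hs
      rw [hsplit, habs]
      nlinarith [Real.rpow_nonneg hu0.le s]
  · have habs : |s| = -s := abs_of_neg hs
    constructor
    · have hu : (6:ℝ)^s ≤ (x/y)^s :=
        Real.rpow_le_rpow_of_nonpos hu0 hu6 (by linarith)
      have h6 : (6:ℝ)^(-|s|) = 6^s := by rw [habs, neg_neg]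
      rw [hsplit, h6]
      nlinarith [Real.rpow_pos_of_pos (show (0:ℝ) < 6 by norm_num) s]
    · have hu : (x/y)^s ≤ 1 :=
        Real.rpow_le_one_of_one_le_of_nonpos hu1 (by linarith)
      have h6 : (1:ℝ) ≤ 6^|s| := Real.one_le_rpow (by norm_num) (abs_nonneg s)
      rw [hsplit]
      nlinarith [Real.rpow_nonneg hu0.le s]

/-! ### The lower box -/

def blow (n : ℕ) (hn : 0 < n) (N : ℕ) : Finset (Fin n → ℤ) :=
  sbox n ⟨0, hn⟩ ((2*N : ℕ) : ℤ) ((3*N : ℕ) : ℤ) (((N / n : ℕ) : ℤ))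

lemma blow_facts (hn : 0 < n) {N : ℕ} (hN : 1 ≤ N) : ∀ k ∈ blow n hn N,
    2*(N:ℝ) ≤ normZ k ∧ normZ k ≤ 4*N ∧ jbZ k ≤ 4*N := by
  intro k hk
  obtain ⟨hlow, hsq⟩ := sbox_mem_bounds hk (by positivity) (by positivity)
  have hn1 : (1:ℝ) ≤ n := by exact_mod_cast hn
  have hN1 : (1:ℝ) ≤ N := by exact_mod_cast hN
  set M : ℝ := ((N / n : ℕ) : ℝ) with hM
  have hM0 : 0 ≤ M := by positivity
  have hMn : M * (n:ℝ) ≤ N := by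
    have h1 : (N/n) * n ≤ N := Nat.div_mul_le_self _ _
    have h2 : ((N/n : ℕ) : ℝ) * ((n:ℕ):ℝ) ≤ ((N:ℕ):ℝ) := by exact_mod_cast h1
    exact h2
  have hMN : M ≤ N := by nlinarith
  have hlow' : 2*(N:ℝ) ≤ normZ k := by
    have : (((2*N:ℕ):ℤ):ℝ) = 2*(N:ℝ) := by push_cast; ring
    rw [← this]; exact hlow
  have hsq' : normZ k ^2 ≤ (3*(N:ℝ))^2 + ((n:ℝ)-1)*M^2 := by
    have e1 : (((3*N:ℕ):ℤ):ℝ) = 3*(N:ℝ) := by push_cast; ring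
    have e2 : ((((N/n:ℕ):ℤ)):ℝ) = M := by rw [hM]; norm_cast
    rw [e1, e2] at hsq
    exact hsq
  have hsq10 : normZ k ^2 ≤ 10*(N:ℝ)^2 := by nlinarith
  have h4 : normZ k ≤ 4*N := by nlinarith [normZ_nonneg k]
  have hjb : jbZ k ≤ 4*N := by
    rw [jbZ_eq]
    have h5 : 1 + normZ k^2 ≤ (4*(N:ℝ))^2 := by nlinarith
    calc Real.sqrt (1 + normZ k^2) ≤ Real.sqrt ((4*(N:ℝ))^2) := Real.sqrt_le_sqrt h5
      _ = 4*(N:ℝ) := Real.sqrt_sq (by positivity)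
  exact ⟨hlow', h4, hjb⟩

lemma blow_card (hn : 0 < n) {N : ℕ} (hN : 1 ≤ N) :
    ((N:ℝ)/n)^n ≤ ((blow n hn N).card : ℝ) ∧ (blow n hn N).Nonempty := by
  have hcard : (blow n hn N).card = (N+1) * (N/n + 1)^(n-1) := by
    rw [blow, card_sbox]
    have e1 : (((3*N:ℕ):ℤ)+1-((2*N:ℕ):ℤ)).toNat = N+1 := by omega
    have e2 : ((((N/n:ℕ):ℤ))+1).toNat = N/n+1 := by generalize N/n = d; omega
    rw [e1, e2]
  have hn1 : (1:ℝ) ≤ n := by exact_mod_cast hn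
  have hN1 : (1:ℝ) ≤ N := by exact_mod_cast hN
  constructor
  · obtain ⟨m, hm⟩ : ∃ m, n = m+1 := ⟨n-1, by omega⟩
    have h1 : (N:ℝ)/n ≤ ((N/n : ℕ):ℝ) + 1 := by
      have := (nat_div_bounds N n hn).2
      linarith
    have h2' : (N:ℝ)/n ≤ N := by
      rw [div_le_iff₀ (by linarith : (0:ℝ) < (n:ℝ))]
      nlinarith
    have h2 : (N:ℝ)/n ≤ (N:ℝ)+1 := by linarith
    have h0 : (0:ℝ) ≤ (N:ℝ)/n := by positivity
    rw [hcard]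
    push_cast
    set u : ℝ := (N:ℝ)/n with hu
    calc u^n = u * u^(n-1) := by
          conv_lhs => rw [show n = 1 + (n-1) by omega]
          rw [pow_add, pow_one]
      _ ≤ ((N:ℝ)+1) * (((N/n : ℕ):ℝ) + 1)^(n-1) :=
          mul_le_mul h2 (pow_le_pow_left₀ h0 h1 _) (by positivity) (by linarith)
  · rw [← Finset.card_pos, hcard]
    positivity

/-! ### Support and convolution representation -/

def suppA (n N : ℕ) : Finset (Fin n → ℤ) := (box n N).filter (fun k => normZ k ≤ (N:ℝ))

lemma seqA_eq_zero {q : ℝ≥0∞} {s C₀ ε : ℝ} {N : ℕ} {k : Fin n → ℤ} (hk : k ∉ suppA n N) :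
    seqA q s C₀ ε N k = 0 := by
  rw [seqA, if_neg]
  intro h
  exact hk (Finset.mem_filter.mpr ⟨mem_box_of_normZ_le h, h⟩)

lemma seqA_nonneg {q : ℝ≥0∞} {s C₀ ε : ℝ} (hC₀ : 1 ≤ C₀) (N : ℕ) (k : Fin n → ℤ) :
    0 ≤ seqA q s C₀ ε N k := by
  rw [seqA]
  split
  · have h1 : (0:ℝ) < C₀ + Real.log (jbZ k) := by
      have := Real.log_nonneg (one_le_jbZ k); linarith
    exact mul_nonneg (Real.rpow_nonneg (jbZ_pos k).le _) (Real.rpow_nonneg h1.le _)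
  · exact le_refl 0

lemma seqB_nonneg (N : ℕ) (k : Fin n → ℤ) : 0 ≤ seqB N k := by
  rw [seqB]; split <;> norm_num

lemma seqB_le_one (N : ℕ) (k : Fin n → ℤ) : seqB N k ≤ 1 := by
  rw [seqB]; split <;> norm_num

lemma conv_eq_sum {q : ℝ≥0∞} {s C₀ ε : ℝ} (N : ℕ) (k : Fin n → ℤ) :
    (∑' ℓ, seqA q s C₀ ε N ℓ * seqB N (k - ℓ))
      = ∑ ℓ ∈ suppA n N, seqA q s C₀ ε N ℓ * seqB N (k - ℓ) :=
  tsum_eq_sum (fun ℓ hℓ => by rw [seqA_eq_zero hℓ, zero_mul])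

lemma conv_nonneg {q : ℝ≥0∞} {s C₀ ε : ℝ} (hC₀ : 1 ≤ C₀) (N : ℕ) (k : Fin n → ℤ) :
    0 ≤ ∑' ℓ, seqA (n := n) q s C₀ ε N ℓ * seqB N (k - ℓ) := by
  rw [conv_eq_sum]
  exact Finset.sum_nonneg fun ℓ _ => mul_nonneg (seqA_nonneg hC₀ N ℓ) (seqB_nonneg N _)

lemma conv_supp {q : ℝ≥0∞} {s C₀ ε : ℝ} (N : ℕ) {k : Fin n → ℤ}
    (hk : ¬ (normZ k ≤ 6*(N:ℝ))) :
    (∑' ℓ, seqA (n := n) q s C₀ ε N ℓ * seqB N (k - ℓ)) = 0 := by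
  rw [conv_eq_sum]
  apply Finset.sum_eq_zero
  intro ℓ hℓ
  have hℓN : normZ ℓ ≤ N := (Finset.mem_filter.mp hℓ).2
  have h1 : 5*(N:ℝ) < normZ (k - ℓ) := by
    have := sub_normZ_le k ℓ
    push_neg at hk
    linarith
  rw [seqB, if_neg (by push_neg; intro _; linarith), mul_zero]

lemma log_two_le_one : Real.log 2 ≤ 1 := by
  calc Real.log 2 ≤ Real.log (Real.exp 1) := Real.log_le_log (by norm_num)
        (by nlinarith [Real.add_one_le_exp 1])
    _ = 1 := Real.log_exp 1

/-- Lower bound for weighted `ℓ^q` norms (finite `q`) via the box `blow`. -/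
lemma blow_norm_lower (hn : 0 < n) {q : ℝ≥0∞} (hq0 : q ≠ 0) (hqt : q ≠ ∞) (s : ℝ)
    {N : ℕ} (hN : 1 ≤ N) (f : (Fin n → ℤ) → ℝ) (A : Finset (Fin n → ℤ))
    (hsupp : ∀ k, k ∉ A → f k = 0) (hA : blow n hn N ⊆ A) (L : ℝ) (hL : 0 ≤ L)
    (hf : ∀ k ∈ blow n hn N, L ≤ |f k|) :
    ENNReal.ofReal (((((n:ℝ))^n)⁻¹ * (6:ℝ)^(-|s*q.toReal|)) ^ (1/q.toReal) *
      (N:ℝ)^(s + (n:ℝ)/q.toReal) * L) ≤ lqsNormR q s f := by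
  have hp0 : 0 < q.toReal := ENNReal.toReal_pos hq0 hqt
  set p := q.toReal with hp
  have hN1 : (1:ℝ) ≤ N := by exact_mod_cast hN
  have hn1 : (1:ℝ) ≤ n := by exact_mod_cast hn
  rw [lqs_eq_sum hq0 hqt s f A hsupp]
  apply ENNReal.ofReal_le_ofReal
  -- pointwise lower bound on the blow box
  have hpt : ∀ k ∈ blow n hn N,
      ((6:ℝ)^(-|s*p|) * (N:ℝ)^(s*p)) * L^p ≤ (jbZ k ^ s * |f k|) ^ p := by
    intro k hk
    obtain ⟨h2N, _, hjb4⟩ := blow_facts hn hN k hk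
    have hjbN : (N:ℝ) ≤ jbZ k := le_trans (by linarith) (le_trans h2N (normZ_le_jbZ k))
    have hjb6 : jbZ k ≤ 6*(N:ℝ) := by linarith
    have hwin := (rpow_window (s*p) hN1 hjbN hjb6).1
    have hjs : (0:ℝ) ≤ jbZ k ^ s := Real.rpow_nonneg (jbZ_pos k).le s
    have h1 : jbZ k ^ s * L ≤ jbZ k ^ s * |f k| :=
      mul_le_mul_of_nonneg_left (hf k hk) hjs
    have h2 : (jbZ k ^ s * L) ^ p ≤ (jbZ k ^ s * |f k|) ^ p :=
      Real.rpow_le_rpow (mul_nonneg hjs hL) h1 hp0.le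
    have h3 : (jbZ k ^ s * L) ^ p = jbZ k ^ (s*p) * L^p := by
      rw [Real.mul_rpow hjs hL, ← Real.rpow_mul (jbZ_pos k).le s p]
    have h4 : ((6:ℝ)^(-|s*p|) * (N:ℝ)^(s*p)) * L^p ≤ jbZ k ^ (s*p) * L^p :=
      mul_le_mul_of_nonneg_right hwin (Real.rpow_nonneg hL p)
    linarith [h3 ▸ h2]
  set X : ℝ := ((6:ℝ)^(-|s*p|) * (N:ℝ)^(s*p)) * L^p with hX
  have hX0 : 0 ≤ X := by
    apply mul_nonneg (mul_nonneg (Real.rpow_nonneg (by norm_num) _)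
      (Real.rpow_nonneg (by positivity) _)) (Real.rpow_nonneg hL p)
  have hterm0 : ∀ k, 0 ≤ (jbZ k ^ s * |f k|) ^ p := fun k => Real.rpow_nonneg
    (mul_nonneg (Real.rpow_nonneg (jbZ_pos k).le s) (abs_nonneg _)) _
  have hsum : ((N:ℝ)/n)^n * X ≤ ∑ k ∈ A, (jbZ k ^ s * |f k|) ^ p := by
    have hcard := (blow_card hn hN).1
    calc ((N:ℝ)/n)^n * X ≤ (((blow n hn N).card : ℝ)) * X :=
          mul_le_mul_of_nonneg_right hcard hX0
      _ = (blow n hn N).card • X := (nsmul_eq_mul _ _).symm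
      _ ≤ ∑ k ∈ blow n hn N, (jbZ k ^ s * |f k|) ^ p :=
          Finset.card_nsmul_le_sum _ _ _ hpt
      _ ≤ ∑ k ∈ A, (jbZ k ^ s * |f k|) ^ p :=
          Finset.sum_le_sum_of_subset_of_nonneg hA (fun k _ _ => hterm0 k)
  have hNp : (0:ℝ) < N := by linarith
  have e1 : ((N:ℝ)/n)^n = (N:ℝ)^((n:ℝ)) * (((n:ℝ))^n)⁻¹ := by
    rw [div_pow, Real.rpow_natCast]
    ring
  have e2 : (N:ℝ)^((n:ℝ)) * (N:ℝ)^(s*p) = (N:ℝ)^((n:ℝ)+s*p) := (Real.rpow_add hNp _ _).symm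
  have einner : ((N:ℝ)/n)^n * X
      = ((((n:ℝ))^n)⁻¹ * (6:ℝ)^(-|s*p|)) * ((N:ℝ)^((n:ℝ)+s*p) * L^p) := by
    rw [hX, e1, ← e2]
    ring
  have e3 : ((N:ℝ)^((n:ℝ)+s*p))^((1:ℝ)/p) = (N:ℝ)^(s + (n:ℝ)/p) := by
    rw [← Real.rpow_mul hNp.le]
    congr 1
    field_simp
    ring
  have e4 : (L^p)^((1:ℝ)/p) = L := by
    rw [← Real.rpow_mul hL, mul_one_div_cancel hp0.ne', Real.rpow_one]
  have emain : (((N:ℝ)/n)^n * X)^((1:ℝ)/p)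
      = ((((n:ℝ))^n)⁻¹ * (6:ℝ)^(-|s*p|))^((1:ℝ)/p) * (N:ℝ)^(s + (n:ℝ)/p) * L := by
    rw [einner, Real.mul_rpow (by positivity) (mul_nonneg (Real.rpow_nonneg hNp.le _)
      (Real.rpow_nonneg hL p)), Real.mul_rpow (Real.rpow_nonneg hNp.le _)
      (Real.rpow_nonneg hL p), e3, e4]
    ring
  calc ((((n:ℝ))^n)⁻¹ * (6:ℝ)^(-|s*p|))^((1:ℝ)/p) * (N:ℝ)^(s + (n:ℝ)/p) * L
      = (((N:ℝ)/n)^n * X)^((1:ℝ)/p) := emain.symm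
    _ ≤ (∑ k ∈ A, (jbZ k ^ s * |f k|) ^ p)^((1:ℝ)/p) :=
        Real.rpow_le_rpow (by positivity) hsum (by positivity)

/-- Upper bound for the weighted norm of `seqB` (finite `q`). -/
lemma seqB_norm_upper {q : ℝ≥0∞} (hq0 : q ≠ 0) (hqt : q ≠ ∞) (s : ℝ)
    {N : ℕ} (hN : 1 ≤ N) :
    lqsNormR q s (seqB (n := n) N) ≤
      ENNReal.ofReal (((11:ℝ)^n * 6^(|s*q.toReal|))^((1:ℝ)/q.toReal) *
        (N:ℝ)^(s + (n:ℝ)/q.toReal)) := by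
  have hp0 : 0 < q.toReal := ENNReal.toReal_pos hq0 hqt
  set p := q.toReal with hp
  have hN1 : (1:ℝ) ≤ N := by exact_mod_cast hN
  have hNp : (0:ℝ) < N := by linarith
  have hsupp : ∀ k : Fin n → ℤ, k ∉ box n (5*N) → seqB (n := n) N k = 0 := by
    intro k hk
    rw [seqB, if_neg]
    rintro ⟨-, h2⟩
    exact hk (mem_box_of_normZ_le (by push_cast; linarith))
  rw [lqs_eq_sum hq0 hqt s _ (box n (5*N)) hsupp]
  apply ENNReal.ofReal_le_ofReal
  set T : ℝ := (6:ℝ)^(|s*p|) * (N:ℝ)^(s*p) with hT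
  have hT0 : 0 ≤ T := mul_nonneg (Real.rpow_nonneg (by norm_num) _)
    (Real.rpow_nonneg hNp.le _)
  have hpt : ∀ k ∈ box n (5*N), (jbZ k ^ s * |seqB (n := n) N k|) ^ p ≤ T := by
    intro k _
    rw [seqB]
    split
    · next h =>
      have hjbN : (N:ℝ) ≤ jbZ k := le_trans h.1 (normZ_le_jbZ k)
      have hjb6 : jbZ k ≤ 6*(N:ℝ) := by
        have := jbZ_le_one_add_normZ k
        have h2 := h.2
        linarith
      have hwin := (rpow_window (s*p) hN1 hjbN hjb6).2
      have h3 : (jbZ k ^ s * |(1:ℝ)|) ^ p = jbZ k ^ (s*p) := by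
        rw [abs_one, mul_one, ← Real.rpow_mul (jbZ_pos k).le s p]
      rw [h3, hT]
      exact hwin
    · rw [abs_zero, mul_zero, Real.zero_rpow hp0.ne']
      exact hT0
  have hcard : (((box n (5*N)).card : ℝ)) ≤ (11:ℝ)^n * (N:ℝ)^((n:ℝ)) := by
    rw [card_box]
    have h1 : (2*(5*N)+1) ≤ 11*N := by omega
    have h2 : ((2*(5*N)+1:ℕ):ℝ)^n ≤ ((11*N:ℕ):ℝ)^n := by
      apply pow_le_pow_left₀ (by positivity)
      exact_mod_cast h1
    calc (((2*(5*N)+1)^n : ℕ):ℝ) = ((2*(5*N)+1:ℕ):ℝ)^n := by push_cast; ring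
      _ ≤ ((11*N:ℕ):ℝ)^n := h2
      _ = (11:ℝ)^n * (N:ℝ)^((n:ℝ)) := by rw [Real.rpow_natCast]; push_cast; rw [mul_pow]
  have hsum : ∑ k ∈ box n (5*N), (jbZ k ^ s * |seqB (n := n) N k|) ^ p
      ≤ ((11:ℝ)^n * 6^(|s*p|)) * (N:ℝ)^((n:ℝ)+s*p) := by
    calc ∑ k ∈ box n (5*N), (jbZ k ^ s * |seqB (n := n) N k|) ^ p
        ≤ ((box n (5*N)).card) • T := Finset.sum_le_card_nsmul _ _ _ hpt
      _ = (((box n (5*N)).card : ℝ)) * T := nsmul_eq_mul _ _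
      _ ≤ ((11:ℝ)^n * (N:ℝ)^((n:ℝ))) * T := mul_le_mul_of_nonneg_right hcard hT0
      _ = ((11:ℝ)^n * 6^(|s*p|)) * ((N:ℝ)^((n:ℝ)) * (N:ℝ)^(s*p)) := by rw [hT]; ring
      _ = ((11:ℝ)^n * 6^(|s*p|)) * (N:ℝ)^((n:ℝ)+s*p) := by
          rw [← Real.rpow_add hNp]
  have e3 : ((N:ℝ)^((n:ℝ)+s*p))^((1:ℝ)/p) = (N:ℝ)^(s + (n:ℝ)/p) := by
    rw [← Real.rpow_mul hNp.le]
    congr 1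
    field_simp
    ring
  calc (∑ k ∈ box n (5*N), (jbZ k ^ s * |seqB (n := n) N k|) ^ p)^((1:ℝ)/p)
      ≤ (((11:ℝ)^n * 6^(|s*p|)) * (N:ℝ)^((n:ℝ)+s*p))^((1:ℝ)/p) := by
        apply Real.rpow_le_rpow (Finset.sum_nonneg fun k _ => Real.rpow_nonneg
          (mul_nonneg (Real.rpow_nonneg (jbZ_pos k).le s) (abs_nonneg _)) _) hsum
          (by positivity)
    _ = ((11:ℝ)^n * 6^(|s*p|))^((1:ℝ)/p) * (N:ℝ)^(s + (n:ℝ)/p) := by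
        rw [Real.mul_rpow (by positivity) (Real.rpow_nonneg hNp.le _), e3]

/-- Uniform upper bound for the weighted norm of `seqA` (finite `q`). -/
lemma seqA_norm_upper (hn : 0 < n) {q : ℝ≥0∞} (hq0 : q ≠ 0) (hqt : q ≠ ∞)
    {s C₀ ε : ℝ} (hC₀ : 1 ≤ C₀) (hε : 0 < ε) :
    ∃ Ka : ℝ, 0 < Ka ∧ ∀ N : ℕ,
      lqsNormR q s (seqA (n := n) q s C₀ ε N) ≤ ENNReal.ofReal Ka := by
  have hp0 : 0 < q.toReal := ENNReal.toReal_pos hq0 hqt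
  set p := q.toReal with hp
  obtain ⟨K, hK, hKb⟩ := shell_sum_le (n := n) hn hC₀ (mul_pos hε hp0)
  refine ⟨K ^ ((1:ℝ)/p), Real.rpow_pos_of_pos hK _, fun N => ?_⟩
  have hsupp : ∀ k : Fin n → ℤ, k ∉ box n N → seqA (n := n) q s C₀ ε N k = 0 := by
    intro k hk
    rw [seqA, if_neg]
    intro h
    exact hk (mem_box_of_normZ_le h)
  rw [lqs_eq_sum hq0 hqt s _ (box n N) hsupp]
  apply ENNReal.ofReal_le_ofReal
  have hFn : ∀ k : Fin n → ℤ, 0 ≤ jbZ k ^ (-(n:ℝ)) * (C₀ + Real.log (jbZ k)) ^ (-(1+ε*p)) := by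
    intro k
    have h1 : (0:ℝ) < C₀ + Real.log (jbZ k) := by
      have := Real.log_nonneg (one_le_jbZ k); linarith
    exact mul_nonneg (Real.rpow_nonneg (jbZ_pos k).le _) (Real.rpow_nonneg h1.le _)
  have hpt : ∀ k ∈ box n N, (jbZ k ^ s * |seqA (n := n) q s C₀ ε N k|) ^ p
      ≤ jbZ k ^ (-(n:ℝ)) * (C₀ + Real.log (jbZ k)) ^ (-(1+ε*p)) := by
    intro k _
    rw [seqA]
    split
    · have hjb := jbZ_pos k
      have hlg : (0:ℝ) < C₀ + Real.log (jbZ k) := by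
        have := Real.log_nonneg (one_le_jbZ k); linarith
      have h0 : (0:ℝ) ≤ jbZ k ^ (-((n:ℝ)/p) - s) * (C₀ + Real.log (jbZ k)) ^ (-(1/p) - ε) :=
        mul_nonneg (Real.rpow_nonneg hjb.le _) (Real.rpow_nonneg hlg.le _)
      rw [abs_of_nonneg h0, ← mul_assoc, ← Real.rpow_add hjb,
        show s + (-((n:ℝ)/p) - s) = -((n:ℝ)/p) by ring,
        Real.mul_rpow (Real.rpow_nonneg hjb.le _) (Real.rpow_nonneg hlg.le _),
        ← Real.rpow_mul hjb.le, ← Real.rpow_mul hlg.le,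
        show -((n:ℝ)/p) * p = -(n:ℝ) by field_simp,
        show (-(1/p) - ε) * p = -(1+ε*p) by field_simp; ring]
    · rw [abs_zero, mul_zero, Real.zero_rpow hp0.ne']
      exact hFn k
  have hsum : ∑ k ∈ box n N, (jbZ k ^ s * |seqA (n := n) q s C₀ ε N k|) ^ p ≤ K :=
    le_trans (Finset.sum_le_sum hpt) (hKb (box n N))
  exact Real.rpow_le_rpow (Finset.sum_nonneg fun k _ => Real.rpow_nonneg
    (mul_nonneg (Real.rpow_nonneg (jbZ_pos k).le s) (abs_nonneg _)) _) hsum (by positivity)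

/-- Bullet 4: pointwise lower bound for the convolution. -/
lemma conv_lower_bullet (hn : 0 < n) {q : ℝ≥0∞} {s C₀ ε : ℝ}
    (hs : s ≤ (n : ℝ) * (1 - 1 / q.toReal)) (hε : 0 < ε)
    (hε' : 0 < 1 - 1 / q.toReal - ε) (hC₀ : 1 ≤ C₀) {N : ℕ} (hN : 1 ≤ N)
    {k : Fin n → ℤ} (h2 : 2*(N:ℝ) ≤ normZ k) (h4 : normZ k ≤ 4*(N:ℝ)) :
    (((4*(n:ℝ))^n)⁻¹ / (6*C₀)) * (1 + Real.log (1+(N:ℝ)/2))^(1 - 1/q.toReal - ε) ≤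
      ∑' ℓ, seqA (n := n) q s C₀ ε N ℓ * seqB N (k - ℓ) := by
  set p := q.toReal with hp
  have hp_nonneg : 0 ≤ p := ENNReal.toReal_nonneg
  set θ : ℝ := 1/p + ε with hθ
  have hθ0 : 0 < θ := by
    have : (0:ℝ) ≤ 1/p := by positivity
    rw [hθ]; linarith
  have hθ1 : θ < 1 := by rw [hθ]; linarith
  have ht : -(n:ℝ) ≤ -((n:ℝ)/p) - s := by
    have hexp : (n:ℝ)*(1-1/p) = n - (n:ℝ)/p := by ring
    rw [hexp] at hs
    linarith
  have hN1 : (1:ℝ) ≤ N := by exact_mod_cast hN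
  rw [conv_eq_sum]
  have hcore := conv_core_lower hn hC₀ hθ0 hθ1 ht N hN
  have hterm : ∀ ℓ ∈ suppA n N, seqA (n := n) q s C₀ ε N ℓ * seqB N (k-ℓ)
      = jbZ ℓ ^ (-((n:ℝ)/p) - s) * (C₀ + Real.log (jbZ ℓ))^(-θ) := by
    intro ℓ hℓ
    have hℓN : normZ ℓ ≤ N := (Finset.mem_filter.mp hℓ).2
    have hB1 : seqB N (k-ℓ) = (1:ℝ) := by
      rw [seqB, if_pos]
      constructor
      · have := sub_normZ_le k ℓ
        linarith
      · have := normZ_sub_le k ℓ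
        linarith
    rw [hB1, mul_one, seqA, if_pos hℓN, show -(1/p) - ε = -θ by rw [hθ]; ring]
  rw [show (∑ ℓ ∈ suppA n N, seqA (n := n) q s C₀ ε N ℓ * seqB N (k-ℓ))
      = ∑ ℓ ∈ suppA n N, jbZ ℓ ^ (-((n:ℝ)/p) - s) * (C₀ + Real.log (jbZ ℓ))^(-θ) from
    Finset.sum_congr rfl hterm,
    show (1:ℝ) - 1/p - ε = 1 - θ by rw [hθ]; ring]
  exact hcore

end CE

set_option maxHeartbeats 2000000 in
open CE in
/-- **counterexample for `s ≤ n/q′`.** Let `1 < q ≤ ∞`, `s ≤ n/q′`, `n ≥ 1`,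
`ε > 0` with `1 − 1/q − ε > 0`, and `C₀ ≥ 1`. Then: `‖a‖_{ℓ^q_s} ≤ C₁` uniformly in `N`;
`‖b‖_{ℓ^q_s} ∼ N^{s+n/q}`; for `2N ≤ |k| ≤ 4N` one has
`(a∗b)_k ≥ c (1 + log(1+N/2))^{1−1/q−ε}`; hence
`‖a∗b‖_{ℓ^q_s} ≥ c′ N^{s+n/q} (1+log(1+N/2))^{1−1/q−ε}`; consequently no bound
`‖a∗b‖_{ℓ^q_s} ≤ C‖a‖_{ℓ^q_s}‖b‖_{ℓ^q_s}` can hold uniformly in `N`. -/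
theorem counterexample_convolution_algebra (n : ℕ) (hn : 0 < n) (q : ℝ≥0∞) (hq : 1 < q)
    (s : ℝ) (hs : s ≤ (n : ℝ) * (1 - 1 / q.toReal))
    (ε : ℝ) (hε : 0 < ε) (hε' : 0 < 1 - 1 / q.toReal - ε)
    (C₀ : ℝ) (hC₀ : 1 ≤ C₀) :
    (∃ C₁ c c' : ℝ, 0 < C₁ ∧ 0 < c ∧ 0 < c' ∧ ∀ N : ℕ, 1 ≤ N →
      lqsNormR q s (seqA (n := n) q s C₀ ε N) ≤ ENNReal.ofReal C₁ ∧
      lqsNormR q s (seqB (n := n) N) ≤ ENNReal.ofReal (C₁ * (N : ℝ) ^ (s + (n : ℝ) / q.toReal)) ∧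
      ENNReal.ofReal (c * (N : ℝ) ^ (s + (n : ℝ) / q.toReal)) ≤ lqsNormR q s (seqB (n := n) N) ∧
      (∀ k : Fin n → ℤ, 2 * (N : ℝ) ≤ normZ k → normZ k ≤ 4 * N →
        c * (1 + Real.log (1 + (N : ℝ) / 2)) ^ (1 - 1 / q.toReal - ε) ≤
          ∑' ℓ, seqA (n := n) q s C₀ ε N ℓ * seqB (n := n) N (k - ℓ)) ∧
      ENNReal.ofReal (c' * (N : ℝ) ^ (s + (n : ℝ) / q.toReal) *
          (1 + Real.log (1 + (N : ℝ) / 2)) ^ (1 - 1 / q.toReal - ε)) ≤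
        lqsNormR q s (fun k => ∑' ℓ, seqA (n := n) q s C₀ ε N ℓ * seqB (n := n) N (k - ℓ))) ∧
    ¬ ∃ C : ℝ≥0, 0 < C ∧ ∀ N : ℕ, 1 ≤ N →
        lqsNormR q s (fun k => ∑' ℓ, seqA (n := n) q s C₀ ε N ℓ * seqB (n := n) N (k - ℓ)) ≤
          C * lqsNormR q s (seqA (n := n) q s C₀ ε N) * lqsNormR q s (seqB (n := n) N) := by
  have hq0 : q ≠ 0 := (zero_lt_one.trans hq).ne'
  set c4 : ℝ := ((4*(n:ℝ))^n)⁻¹ / (6*C₀) with hc4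
  have hc4pos : 0 < c4 := div_pos (by positivity) (by linarith)
  have hbase_nonneg : ∀ N : ℕ, 1 ≤ N → (0:ℝ) ≤ 1 + Real.log (1 + (N:ℝ)/2) := by
    intro N hN
    have hN1 : (1:ℝ) ≤ N := by exact_mod_cast hN
    have := Real.log_nonneg (by linarith : (1:ℝ) ≤ 1 + (N:ℝ)/2)
    linarith
  have bullet4 : ∀ N : ℕ, 1 ≤ N → ∀ k : Fin n → ℤ, 2*(N:ℝ) ≤ normZ k →
      normZ k ≤ 4*(N:ℝ) →
      c4 * (1 + Real.log (1+(N:ℝ)/2))^(1 - 1/q.toReal - ε) ≤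
        ∑' ℓ, seqA (n := n) q s C₀ ε N ℓ * seqB N (k - ℓ) :=
    fun N hN k h2 h4 => CE.conv_lower_bullet hn hs hε hε' hC₀ hN h2 h4
  have main : (∃ C₁ c c' : ℝ, 0 < C₁ ∧ 0 < c ∧ 0 < c' ∧ ∀ N : ℕ, 1 ≤ N →
      lqsNormR q s (seqA (n := n) q s C₀ ε N) ≤ ENNReal.ofReal C₁ ∧
      lqsNormR q s (seqB (n := n) N) ≤ ENNReal.ofReal (C₁ * (N : ℝ) ^ (s + (n : ℝ) / q.toReal)) ∧
      ENNReal.ofReal (c * (N : ℝ) ^ (s + (n : ℝ) / q.toReal)) ≤ lqsNormR q s (seqB (n := n) N) ∧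
      (∀ k : Fin n → ℤ, 2 * (N : ℝ) ≤ normZ k → normZ k ≤ 4 * N →
        c * (1 + Real.log (1 + (N : ℝ) / 2)) ^ (1 - 1 / q.toReal - ε) ≤
          ∑' ℓ, seqA (n := n) q s C₀ ε N ℓ * seqB (n := n) N (k - ℓ)) ∧
      ENNReal.ofReal (c' * (N : ℝ) ^ (s + (n : ℝ) / q.toReal) *
          (1 + Real.log (1 + (N : ℝ) / 2)) ^ (1 - 1 / q.toReal - ε)) ≤
        lqsNormR q s (fun k => ∑' ℓ, seqA (n := n) q s C₀ ε N ℓ * seqB (n := n) N (k - ℓ))) := by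
    rcases eq_or_ne q ∞ with hqt | hqt
    · -- q = ∞
      subst hqt
      have htr : (⊤:ℝ≥0∞).toReal = 0 := ENNReal.toReal_top
      have he : s + (n:ℝ)/(⊤:ℝ≥0∞).toReal = s := by rw [htr]; simp
      set Cs : ℝ := (6:ℝ)^(|s|) with hCs
      set c3 : ℝ := (6:ℝ)^(-|s|) with hc3
      have hc3pos : 0 < c3 := Real.rpow_pos_of_pos (by norm_num) _
      refine ⟨max 1 Cs, min c3 c4, c3 * c4, lt_max_of_lt_left one_pos,
        lt_min hc3pos hc4pos, mul_pos hc3pos hc4pos, fun N hN => ?_⟩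
      have hN1 : (1:ℝ) ≤ N := by exact_mod_cast hN
      have hNp : (0:ℝ) < N := by linarith
      have hNs : (0:ℝ) ≤ (N:ℝ)^s := Real.rpow_nonneg hNp.le _
      obtain ⟨k₀, hk₀⟩ := (CE.blow_card hn hN).2
      obtain ⟨hk2, hk4, hkjb⟩ := CE.blow_facts hn hN k₀ hk₀
      have hjbN : (N:ℝ) ≤ jbZ k₀ := le_trans (by linarith) (le_trans hk2 (CE.normZ_le_jbZ k₀))
      have hjb6 : jbZ k₀ ≤ 6*(N:ℝ) := by linarith
      have hwin := CE.rpow_window s hN1 hjbN hjb6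
      refine ⟨?_, ?_, ?_, ?_, ?_⟩
      · rw [CE.lqs_top_eq]
        refine iSup_le fun k => ENNReal.ofReal_le_ofReal ?_
        rw [seqA]
        split
        · next h =>
          have hlg : (0:ℝ) < C₀ + Real.log (jbZ k) := by
            have := Real.log_nonneg (CE.one_le_jbZ k); linarith
          have e1 : -((n:ℝ)/(⊤:ℝ≥0∞).toReal) - s = -s := by rw [htr]; simp
          have e2 : -(1/(⊤:ℝ≥0∞).toReal) - ε = -ε := by rw [htr]; simp
          rw [e1, e2, abs_of_nonneg (mul_nonneg (Real.rpow_nonneg (CE.jbZ_pos k).le _)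
            (Real.rpow_nonneg hlg.le _)), ← mul_assoc, ← Real.rpow_add (CE.jbZ_pos k),
            show s + -s = 0 by ring, Real.rpow_zero, one_mul]
          have h1le : (1:ℝ) ≤ C₀ + Real.log (jbZ k) := by
            have := Real.log_nonneg (CE.one_le_jbZ k); linarith
          exact le_trans (Real.rpow_le_one_of_one_le_of_nonpos h1le (by linarith))
            (le_max_left 1 Cs)
        · rw [abs_zero, mul_zero]
          exact le_trans zero_le_one (le_max_left 1 Cs)
      · rw [CE.lqs_top_eq, he]
        refine iSup_le fun k => ENNReal.ofReal_le_ofReal ?_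
        rw [seqB]
        split
        · next h =>
          have hjbN' : (N:ℝ) ≤ jbZ k := le_trans h.1 (CE.normZ_le_jbZ k)
          have hjb6' : jbZ k ≤ 6*(N:ℝ) := by
            have := CE.jbZ_le_one_add_normZ k
            have h2 := h.2
            linarith
          have hw := (CE.rpow_window s hN1 hjbN' hjb6').2
          rw [abs_one, mul_one]
          calc jbZ k ^ s ≤ Cs * (N:ℝ)^s := hw
            _ ≤ max 1 Cs * (N:ℝ)^s := mul_le_mul_of_nonneg_right (le_max_right 1 Cs) hNs
        · rw [abs_zero, mul_zero]
          positivity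
      · rw [CE.lqs_top_eq, he]
        refine le_trans (ENNReal.ofReal_le_ofReal ?_)
          (le_iSup (fun k => ENNReal.ofReal (jbZ k ^ s * |seqB (n := n) N k|)) k₀)
        have hB1 : seqB (n := n) N k₀ = (1:ℝ) := by
          rw [seqB, if_pos ⟨by linarith, by linarith⟩]
        rw [hB1, abs_one, mul_one]
        calc min c3 c4 * (N:ℝ)^s ≤ c3 * (N:ℝ)^s :=
              mul_le_mul_of_nonneg_right (min_le_left _ _) hNs
          _ ≤ jbZ k₀ ^ s := hwin.1
      · intro k h2 h4
        have hX := hbase_nonneg N hN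
        refine le_trans ?_ (bullet4 N hN k h2 h4)
        exact mul_le_mul_of_nonneg_right (min_le_right _ _) (Real.rpow_nonneg hX _)
      · rw [CE.lqs_top_eq, he]
        set L : ℝ := c4 * (1 + Real.log (1+(N:ℝ)/2))^(1 - 1/(⊤:ℝ≥0∞).toReal - ε) with hL
        have hL0 : 0 ≤ L := mul_nonneg hc4pos.le (Real.rpow_nonneg (hbase_nonneg N hN) _)
        refine le_trans (ENNReal.ofReal_le_ofReal ?_)
          (le_iSup (fun k => ENNReal.ofReal (jbZ k ^ s *
            |∑' ℓ, seqA (n := n) ⊤ s C₀ ε N ℓ * seqB (n := n) N (k - ℓ)|)) k₀)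
        have hconv : L ≤ |∑' ℓ, seqA (n := n) ⊤ s C₀ ε N ℓ * seqB (n := n) N (k₀ - ℓ)| :=
          le_trans (bullet4 N hN k₀ hk2 hk4) (le_abs_self _)
        have hjs : (0:ℝ) ≤ jbZ k₀ ^ s := Real.rpow_nonneg (CE.jbZ_pos k₀).le s
        calc c3 * c4 * (N:ℝ)^s * (1 + Real.log (1+(N:ℝ)/2))^(1 - 1/(⊤:ℝ≥0∞).toReal - ε)
            = (c3 * (N:ℝ)^s) * L := by rw [hL]; ring
          _ ≤ jbZ k₀ ^ s * L := mul_le_mul_of_nonneg_right hwin.1 hL0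
          _ ≤ jbZ k₀ ^ s * |∑' ℓ, seqA (n := n) ⊤ s C₀ ε N ℓ * seqB (n := n) N (k₀ - ℓ)| :=
              mul_le_mul_of_nonneg_left hconv hjs
    · -- finite q
      have hp0 : 0 < q.toReal := ENNReal.toReal_pos hq0 hqt
      set p := q.toReal with hp
      obtain ⟨Ka, hKa, hKab⟩ := CE.seqA_norm_upper (n := n) hn hq0 hqt hC₀ hε
      set Cb : ℝ := ((11:ℝ)^n * 6^(|s*p|))^((1:ℝ)/p) with hCb
      have hCbpos : 0 < Cb := Real.rpow_pos_of_pos (by positivity) _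
      set c3 : ℝ := ((((n:ℝ))^n)⁻¹ * (6:ℝ)^(-|s*p|))^((1:ℝ)/p) with hc3
      have hc3pos : 0 < c3 := Real.rpow_pos_of_pos (by positivity) _
      refine ⟨max Ka Cb, min c3 c4, c3 * c4, lt_max_of_lt_left hKa,
        lt_min hc3pos hc4pos, mul_pos hc3pos hc4pos, fun N hN => ?_⟩
      have hN1 : (1:ℝ) ≤ N := by exact_mod_cast hN
      have hNp : (0:ℝ) < N := by linarith
      have hNσ : (0:ℝ) ≤ (N:ℝ)^(s + (n:ℝ)/p) := Real.rpow_nonneg hNp.le _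
      have hblow_sub : ∀ (R : ℕ), 4*N ≤ R → blow n hn N ⊆ box n R := by
        intro R hR k hk
        obtain ⟨-, h4, -⟩ := CE.blow_facts hn hN k hk
        refine CE.mem_box_of_normZ_le (le_trans h4 ?_)
        exact_mod_cast hR
      refine ⟨?_, ?_, ?_, ?_, ?_⟩
      · exact le_trans (hKab N) (ENNReal.ofReal_le_ofReal (le_max_left _ _))
      · refine le_trans (CE.seqB_norm_upper hq0 hqt s hN) (ENNReal.ofReal_le_ofReal ?_)
        exact mul_le_mul_of_nonneg_right (le_max_right _ _) hNσ
      · -- lower bound for b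
        have hsupp : ∀ k : Fin n → ℤ, k ∉ box n (5*N) → seqB (n := n) N k = 0 := by
          intro k hk
          rw [seqB, if_neg]
          rintro ⟨-, h2⟩
          exact hk (CE.mem_box_of_normZ_le (by push_cast; linarith))
        have hf : ∀ k ∈ blow n hn N, (1:ℝ) ≤ |seqB (n := n) N k| := by
          intro k hk
          obtain ⟨h2, h4, -⟩ := CE.blow_facts hn hN k hk
          rw [seqB, if_pos ⟨by linarith, by push_cast; linarith⟩, abs_one]
        have hlow := CE.blow_norm_lower hn hq0 hqt s hN (seqB (n := n) N) (box n (5*N))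
          hsupp (hblow_sub (5*N) (by omega)) 1 zero_le_one hf
        rw [mul_one] at hlow
        refine le_trans (ENNReal.ofReal_le_ofReal ?_) hlow
        exact mul_le_mul_of_nonneg_right (min_le_left _ _) hNσ
      · intro k h2 h4
        have hX := hbase_nonneg N hN
        refine le_trans ?_ (bullet4 N hN k h2 h4)
        exact mul_le_mul_of_nonneg_right (min_le_right _ _) (Real.rpow_nonneg hX _)
      · -- lower bound for the convolution norm
        set L : ℝ := c4 * (1 + Real.log (1+(N:ℝ)/2))^(1 - 1/p - ε) with hL
        have hL0 : 0 ≤ L := mul_nonneg hc4pos.le (Real.rpow_nonneg (hbase_nonneg N hN) _)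
        have hsupp : ∀ k : Fin n → ℤ, k ∉ box n (6*N) →
            (∑' ℓ, seqA (n := n) q s C₀ ε N ℓ * seqB (n := n) N (k - ℓ)) = 0 := by
          intro k hk
          refine CE.conv_supp N ?_
          intro h6
          exact hk (CE.mem_box_of_normZ_le (by push_cast; linarith))
        have hf : ∀ k ∈ blow n hn N,
            L ≤ |∑' ℓ, seqA (n := n) q s C₀ ε N ℓ * seqB (n := n) N (k - ℓ)| := by
          intro k hk
          obtain ⟨h2, h4, -⟩ := CE.blow_facts hn hN k hk
          refine le_trans (bullet4 N hN k h2 h4) (le_abs_self _)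
        have hlow := CE.blow_norm_lower hn hq0 hqt s hN
          (fun k => ∑' ℓ, seqA (n := n) q s C₀ ε N ℓ * seqB (n := n) N (k - ℓ))
          (box n (6*N)) hsupp (hblow_sub (6*N) (by omega)) L hL0 hf
        refine le_trans (ENNReal.ofReal_le_ofReal (le_of_eq ?_)) hlow
        rw [hL, hc3]
        ring
  refine ⟨main, ?_⟩
  obtain ⟨C₁, c, c', hC₁, hc, hc', hb⟩ := main
  rintro ⟨C, hC0, hCb⟩
  set τ : ℝ := 1 - 1/q.toReal - ε with hτdef
  have hτ : 0 < τ := hε'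
  set B : ℝ := (C:ℝ) * C₁ * C₁ / c' with hB
  have hB0 : 0 ≤ B := by positivity
  set x : ℝ := (B+1)^(τ⁻¹) with hx
  have hx0 : 0 ≤ x := Real.rpow_nonneg (by linarith) _
  set N : ℕ := ⌈Real.exp x⌉₊ with hNdef
  have hN : 1 ≤ N := Nat.ceil_pos.mpr (Real.exp_pos x)
  have hN1 : (1:ℝ) ≤ N := by exact_mod_cast hN
  have hNx : Real.exp x ≤ N := Nat.le_ceil _
  have hlogN : x ≤ Real.log N := by
    rw [← Real.log_exp x]
    exact Real.log_le_log (Real.exp_pos x) hNx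
  have hbase : x ≤ 1 + Real.log (1 + (N:ℝ)/2) := by
    have h1 : Real.log ((N:ℝ)/2) ≤ Real.log (1 + (N:ℝ)/2) :=
      Real.log_le_log (by positivity) (by linarith)
    have h2 : Real.log ((N:ℝ)/2) = Real.log N - Real.log 2 :=
      Real.log_div (by positivity) (by norm_num)
    have := CE.log_two_le_one
    linarith
  obtain ⟨b1, b2, b3, b4, b5⟩ := hb N hN
  have hNσpos : (0:ℝ) < (N:ℝ)^(s+(n:ℝ)/q.toReal) := Real.rpow_pos_of_pos (by linarith) _
  have hchain : ENNReal.ofReal (c' * (N:ℝ)^(s+(n:ℝ)/q.toReal) *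
      (1 + Real.log (1 + (N:ℝ)/2))^τ) ≤
      ENNReal.ofReal (((C:ℝ) * C₁) * (C₁ * (N:ℝ)^(s+(n:ℝ)/q.toReal))) := by
    refine le_trans b5 (le_trans (hCb N hN) ?_)
    calc (C:ℝ≥0∞) * lqsNormR q s (seqA (n := n) q s C₀ ε N) * lqsNormR q s (seqB (n := n) N)
        ≤ (C:ℝ≥0∞) * ENNReal.ofReal C₁ * ENNReal.ofReal (C₁ * (N:ℝ)^(s+(n:ℝ)/q.toReal)) :=
          mul_le_mul' (mul_le_mul' le_rfl b1) b2
      _ = ENNReal.ofReal (((C:ℝ) * C₁) * (C₁ * (N:ℝ)^(s+(n:ℝ)/q.toReal))) := by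
          rw [← ENNReal.ofReal_coe_nnreal, ← ENNReal.ofReal_mul (by positivity),
            ← ENNReal.ofReal_mul (by positivity)]
  have hreal : c' * (N:ℝ)^(s+(n:ℝ)/q.toReal) * (1 + Real.log (1 + (N:ℝ)/2))^τ ≤
      ((C:ℝ) * C₁) * (C₁ * (N:ℝ)^(s+(n:ℝ)/q.toReal)) :=
    (ENNReal.ofReal_le_ofReal_iff (by positivity)).mp hchain
  have hdiv : c' * (1 + Real.log (1 + (N:ℝ)/2))^τ ≤ (C:ℝ) * C₁ * C₁ := by
    have h1 : (c' * (1 + Real.log (1 + (N:ℝ)/2))^τ) * (N:ℝ)^(s+(n:ℝ)/q.toReal) ≤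
        ((C:ℝ) * C₁ * C₁) * (N:ℝ)^(s+(n:ℝ)/q.toReal) := by
      calc (c' * (1 + Real.log (1 + (N:ℝ)/2))^τ) * (N:ℝ)^(s+(n:ℝ)/q.toReal)
          = c' * (N:ℝ)^(s+(n:ℝ)/q.toReal) * (1 + Real.log (1 + (N:ℝ)/2))^τ := by ring
        _ ≤ ((C:ℝ) * C₁) * (C₁ * (N:ℝ)^(s+(n:ℝ)/q.toReal)) := hreal
        _ = ((C:ℝ) * C₁ * C₁) * (N:ℝ)^(s+(n:ℝ)/q.toReal) := by ring
    exact le_of_mul_le_mul_right h1 hNσpos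
  have hxτ : x^τ = B + 1 := by
    rw [hx, ← Real.rpow_mul (by linarith : (0:ℝ) ≤ B+1), inv_mul_cancel₀ hτ.ne',
      Real.rpow_one]
  have hgrow : B + 1 ≤ (1 + Real.log (1 + (N:ℝ)/2))^τ := by
    rw [← hxτ]
    exact Real.rpow_le_rpow hx0 hbase hτ.le
  have hBc : B * c' = (C:ℝ) * C₁ * C₁ := div_mul_cancel₀ _ hc'.ne'
  nlinarith [mul_le_mul_of_nonneg_left hgrow hc'.le]
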